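/- arXiv:1304.1315 — 3 statements merged into one kernel-verified Lean document; each statement's English description precedes it below -/
import Mathlib

section
/- Let k be even and let G=(V,E) and G'=(V',E') be two k-uniform hypergraphs with Laplacian tensors L and L' respectively. If V⊆V' and E⊆E', then λ(L) ≤ λ(L'). -/
open Finset

variable {α : Type*} [DecidableEq α]

/-- The degree of a vertex `i`: the number of edges containing `i`. -/
def hdeg (E : Finset (Finset α)) (i : α) : ℕ := (E.filter (fun e => i ∈ e)).card

/-- The action of the Laplacian tensor: `(L x^{k-1})_i`. -/
def lapAct (k : ℕ) (E : Finset (Finset α)) (x : α → ℝ) (i : α) : ℝ :=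
  (hdeg E i : ℝ) * x i ^ (k - 1) - ∑ e ∈ E.filter (fun e => i ∈ e), ∏ j ∈ e.erase i, x j

/-- The action of the signless Laplacian tensor: `(Q x^{k-1})_i`. -/
def signAct (k : ℕ) (E : Finset (Finset α)) (x : α → ℝ) (i : α) : ℝ :=
  (hdeg E i : ℝ) * x i ^ (k - 1) + ∑ e ∈ E.filter (fun e => i ∈ e), ∏ j ∈ e.erase i, x j

/-- The action of the adjacency tensor: `(A x^{k-1})_i`. -/
def adjAct (E : Finset (Finset α)) (x : α → ℝ) (i : α) : ℝ :=
  ∑ e ∈ E.filter (fun e => i ∈ e), ∏ j ∈ e.erase i, x j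

/-- `lam` is an H-eigenvalue of the Laplacian tensor. -/
def IsLapEig (k : ℕ) (E : Finset (Finset α)) (lam : ℝ) : Prop :=
  ∃ x : α → ℝ, x ≠ 0 ∧ ∀ i, lapAct k E x i = lam * x i ^ (k - 1)

/-- `lam` is the largest H-eigenvalue of the Laplacian tensor. -/
def IsLargestLapEig (k : ℕ) (E : Finset (Finset α)) (lam : ℝ) : Prop :=
  IsLapEig k E lam ∧ ∀ mu : ℝ, IsLapEig k E mu → mu ≤ lam

/-- `lam` is an H-eigenvalue of the signless Laplacian tensor. -/
def IsSignEig (k : ℕ) (E : Finset (Finset α)) (lam : ℝ) : Prop :=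
  ∃ x : α → ℝ, x ≠ 0 ∧ ∀ i, signAct k E x i = lam * x i ^ (k - 1)

/-- `lam` is the largest H-eigenvalue of the signless Laplacian tensor. -/
def IsLargestSignEig (k : ℕ) (E : Finset (Finset α)) (lam : ℝ) : Prop :=
  IsSignEig k E lam ∧ ∀ mu : ℝ, IsSignEig k E mu → mu ≤ lam

/-- `lam` is an H-eigenvalue of the adjacency tensor. -/
def IsAdjEig (k : ℕ) (E : Finset (Finset α)) (lam : ℝ) : Prop :=
  ∃ x : α → ℝ, x ≠ 0 ∧ ∀ i, adjAct E x i = lam * x i ^ (k - 1)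

/-- `lam` is the largest H-eigenvalue of the adjacency tensor. -/
def IsLargestAdjEig (k : ℕ) (E : Finset (Finset α)) (lam : ℝ) : Prop :=
  IsAdjEig k E lam ∧ ∀ mu : ℝ, IsAdjEig k E mu → mu ≤ lam

/-- `G = (V, E)` is a `k`-uniform hyperstar of size `d`: there is a heart `h` and a
disjoint partition of the remaining vertices into `d` parts of size `k-1`, the edges
being the heart together with one part. -/
def IsHyperstar (k d : ℕ) (E : Finset (Finset α)) : Prop :=
  ∃ (h : α) (P : Fin d → Finset α),
    (∀ i, h ∉ P i) ∧
    (∀ i, (P i).card = k - 1) ∧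
    (∀ i j, i ≠ j → Disjoint (P i) (P j)) ∧
    (∀ v : α, v ≠ h → ∃ i, v ∈ P i) ∧
    E = Finset.image (fun i => insert h (P i)) Finset.univ

/-- The hypergraph is connected: any two distinct vertices are joined by a chain of
pairwise intersecting edges. -/
def IsConnectedH (E : Finset (Finset α)) : Prop :=
  ∀ i j : α, i ≠ j → Relation.TransGen (fun a b : α => ∃ e ∈ E, a ∈ e ∧ b ∈ e) i j

/-- For `k` even: the hypergraph is odd-bipartite. -/
def IsOddBipartite [Fintype α] (E : Finset (Finset α)) : Prop :=
  E = ∅ ∨ ∃ V₁ : Finset α, V₁ ≠ ∅ ∧ V₁ ≠ Finset.univ ∧ ∀ e ∈ E, Odd (e ∩ V₁).card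

/-- `G = (V, E)` is a `k`-uniform hypercycle of size `s`. -/
def IsHypercycle (k : ℕ) (s : ℕ) [NeZero s] (E : Finset (Finset α)) : Prop :=
  ∃ P : Fin s → Finset α,
    (∀ i, (P i).card = k) ∧
    (∀ v : α, ∃ i, v ∈ P i) ∧
    E = Finset.image P Finset.univ ∧
    (∀ i : Fin s, (P i ∩ P (i + 1)).card = 1) ∧
    (∀ i j : Fin s, i ≠ j → j ≠ i + 1 → i ≠ j + 1 → P i ∩ P j = ∅) ∧
    Function.Injective (fun i : Fin s => P i ∩ P (i + 1))
set_option linter.unusedSectionVars false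
section Aux
variable {β : Type*} [Fintype β] [DecidableEq β]

def edgeTerm (k : ℕ) (x : β → ℝ) (e : Finset β) : ℝ :=
  (∑ i ∈ e, x i ^ k) - k * ∏ j ∈ e, x j

def edgeForm (k : ℕ) (E : Finset (Finset β)) (x : β → ℝ) : ℝ :=
  ∑ e ∈ E, edgeTerm k x e


lemma edgeTerm_nonneg {k : ℕ} (hk : 0 < k) (hkeven : Even k) (x : β → ℝ) {e : Finset β}
    (hcard : e.card = k) : 0 ≤ edgeTerm k x e := by
  have hk0 : (k : ℝ) ≠ 0 := Nat.cast_ne_zero.mpr hk.ne'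
  have habs : ∀ i ∈ e, ((|x i| ^ k : ℝ) ^ ((k : ℝ)⁻¹) : ℝ) = |x i| := by
    intro i _
    rw [← Real.rpow_natCast |x i| k, ← Real.rpow_mul (abs_nonneg _),
      mul_inv_cancel₀ hk0, Real.rpow_one]
  have hgm := Real.geom_mean_le_arith_mean_weighted e (fun _ => (k : ℝ)⁻¹)
      (fun i => |x i| ^ k) (fun i _ => by positivity) ?_ (fun i _ => by positivity)
  swap
  · rw [Finset.sum_const, hcard, nsmul_eq_mul, mul_inv_cancel₀ hk0]
  rw [Finset.prod_congr rfl habs] at hgm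
  have h2 : (k : ℝ) * ∏ j ∈ e, x j ≤ ∑ i ∈ e, x i ^ k := by
    calc (k : ℝ) * ∏ j ∈ e, x j ≤ (k : ℝ) * ∏ j ∈ e, |x j| := by
          refine mul_le_mul_of_nonneg_left ?_ (by positivity)
          calc ∏ j ∈ e, x j ≤ |∏ j ∈ e, x j| := le_abs_self _
            _ = ∏ j ∈ e, |x j| := Finset.abs_prod _ _
      _ ≤ (k : ℝ) * ∑ i ∈ e, (k : ℝ)⁻¹ * |x i| ^ k :=
          mul_le_mul_of_nonneg_left hgm (by positivity)
      _ = ∑ i ∈ e, |x i| ^ k := by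
          rw [← Finset.mul_sum, ← mul_assoc, mul_inv_cancel₀ hk0, one_mul]
      _ = ∑ i ∈ e, x i ^ k := Finset.sum_congr rfl fun i _ => hkeven.pow_abs _
  simpa [edgeTerm, sub_nonneg] using h2

lemma edgeForm_eq_sum_mul_lapAct {k : ℕ} (hk : 1 ≤ k) {E : Finset (Finset β)}
    (hunif : ∀ e ∈ E, e.card = k) (x : β → ℝ) :
    edgeForm k E x = ∑ i, x i * lapAct k E x i := by
  have h1 : ∀ i, x i * lapAct k E x i =
      (∑ e ∈ E, if i ∈ e then x i ^ k else 0) -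
      ∑ e ∈ E, if i ∈ e then ∏ j ∈ e, x j else 0 := by
    intro i
    rw [lapAct, mul_sub]
    congr 1
    · rw [← Finset.sum_filter, Finset.sum_const, hdeg, nsmul_eq_mul]
      have : x i * x i ^ (k - 1) = x i ^ k := by
        rw [← pow_succ', Nat.sub_add_cancel hk]
      rw [← this]; ring
    · rw [← Finset.sum_filter, Finset.mul_sum]
      refine Finset.sum_congr rfl fun e he => ?_
      exact Finset.mul_prod_erase e x (Finset.mem_filter.mp he).2
  calc edgeForm k E x
      = ∑ e ∈ E, ((∑ i, if i ∈ e then x i ^ k else 0) -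
          ∑ i, if i ∈ e then ∏ j ∈ e, x j else 0) := by
        refine Finset.sum_congr rfl fun e he => ?_
        rw [edgeTerm]
        congr 1
        · rw [Finset.sum_ite_mem, Finset.univ_inter]
        · rw [Finset.sum_ite_mem, Finset.univ_inter, Finset.sum_const, hunif e he,
            nsmul_eq_mul]
    _ = ∑ i, x i * lapAct k E x i := by
        rw [Finset.sum_sub_distrib, Finset.sum_comm, Finset.sum_comm (t := Finset.univ),
          ← Finset.sum_sub_distrib]
        exact Finset.sum_congr rfl fun i _ => (h1 i).symm

lemma edgeForm_smul {k : ℕ} {E : Finset (Finset β)} (hunif : ∀ e ∈ E, e.card = k)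
    (c : ℝ) (x : β → ℝ) :
    edgeForm k E (fun i => c * x i) = c ^ k * edgeForm k E x := by
  rw [edgeForm, edgeForm, Finset.mul_sum]
  refine Finset.sum_congr rfl fun e he => ?_
  rw [edgeTerm, edgeTerm, mul_sub]
  congr 1
  · rw [Finset.mul_sum]
    exact Finset.sum_congr rfl fun i _ => mul_pow c (x i) k
  · have : ∏ j ∈ e, (c * x j) = c ^ k * ∏ j ∈ e, x j := by
      rw [Finset.prod_mul_distrib, Finset.prod_const, hunif e he]
    rw [this]; ring

end Aux
section Deriv
variable {β : Type*} [Fintype β] [DecidableEq β]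

noncomputable def powConstraintDeriv (k : ℕ) (x : β → ℝ) : (β → ℝ) →L[ℝ] ℝ :=
  ∑ i, ((k : ℝ) * x i ^ (k - 1)) • ContinuousLinearMap.proj i

noncomputable def edgeFormDeriv (k : ℕ) (E : Finset (Finset β)) (x : β → ℝ) :
    (β → ℝ) →L[ℝ] ℝ :=
  ∑ e ∈ E, ((∑ i ∈ e, ((k : ℝ) * x i ^ (k - 1)) • ContinuousLinearMap.proj i)
    - (k : ℝ) • ∑ i ∈ e, (∏ j ∈ e.erase i, x j) • ContinuousLinearMap.proj i)

lemma hasStrict_pow (k : ℕ) (i : β) (x : β → ℝ) :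
    HasStrictFDerivAt (𝕜 := ℝ) (fun y : β → ℝ => y i ^ k)
      (((k : ℝ) * x i ^ (k - 1)) • ContinuousLinearMap.proj i) x := by
  simpa [Function.comp_def] using
    (hasStrictDerivAt_pow k (x i)).comp_hasStrictFDerivAt x
      ((ContinuousLinearMap.proj i : (β → ℝ) →L[ℝ] ℝ).hasStrictFDerivAt (x := x))

lemma hasStrict_constraint (k : ℕ) (x : β → ℝ) :
    HasStrictFDerivAt (fun y : β → ℝ => ∑ i, y i ^ k) (powConstraintDeriv k x) x :=
  HasStrictFDerivAt.fun_sum fun i _ => hasStrict_pow k i x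

lemma hasStrict_edgeForm (k : ℕ) (E : Finset (Finset β)) (x : β → ℝ) :
    HasStrictFDerivAt (edgeForm k E) (edgeFormDeriv k E x) x := by
  refine HasStrictFDerivAt.fun_sum fun e _ => ?_
  refine HasStrictFDerivAt.sub (HasStrictFDerivAt.fun_sum fun i _ => hasStrict_pow k i x) ?_
  exact (HasStrictFDerivAt.finset_prod fun i _ =>
    (ContinuousLinearMap.proj i : (β → ℝ) →L[ℝ] ℝ).hasStrictFDerivAt).const_mul _

lemma powConstraintDeriv_apply_single (k : ℕ) (x : β → ℝ) (i₀ : β) :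
    powConstraintDeriv k x (Pi.single i₀ 1) = (k : ℝ) * x i₀ ^ (k - 1) := by
  simp [powConstraintDeriv, Pi.single_apply]

lemma edgeFormDeriv_apply_single (k : ℕ) (E : Finset (Finset β)) (x : β → ℝ) (i₀ : β) :
    edgeFormDeriv k E x (Pi.single i₀ 1) = (k : ℝ) * lapAct k E x i₀ := by
  simp only [edgeFormDeriv, ContinuousLinearMap.sum_apply, ContinuousLinearMap.sub_apply,
    ContinuousLinearMap.smul_apply, ContinuousLinearMap.proj_apply, smul_eq_mul,
    Pi.single_apply, mul_ite, mul_one, mul_zero, Finset.sum_ite_eq' ]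
  rw [lapAct, mul_sub, Finset.sum_sub_distrib]
  congr 1
  · rw [← Finset.sum_filter, Finset.sum_const, hdeg, nsmul_eq_mul]; ring
  · rw [← Finset.sum_filter, Finset.mul_sum]

end Deriv
section Extract
variable {β : Type*} [Fintype β] [DecidableEq β]

lemma exists_top_eig {k : ℕ} (hk : 2 ≤ k) (hkeven : Even k) [Nonempty β]
    {E : Finset (Finset β)} (hunif : ∀ e ∈ E, e.card = k) :
    ∃ mu : ℝ, IsLapEig k E mu ∧
      ∀ x : β → ℝ, (∑ i, x i ^ k) = 1 → edgeForm k E x ≤ mu := by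
  have hk0 : k ≠ 0 := by omega
  have hk1 : 1 ≤ k := by omega
  set g : (β → ℝ) → ℝ := fun x => ∑ i, x i ^ k with hg
  set S : Set (β → ℝ) := {x | g x = 1} with hS
  -- S is nonempty
  have hSne : S.Nonempty := by
    refine ⟨Pi.single (Classical.arbitrary β) 1, ?_⟩
    simp only [hS, hg, Set.mem_setOf_eq, Pi.single_apply]
    rw [Finset.sum_congr rfl (fun i _ => apply_ite (· ^ k) _ _ _)]
    simp [hk0]
  -- continuity
  have hgcont : Continuous g :=
    continuous_finset_sum _ fun i _ => (continuous_apply i).pow k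
  have hφcont : Continuous (edgeForm k E (β := β)) := by
    refine continuous_finset_sum _ fun e _ => ?_
    exact (continuous_finset_sum _ fun i _ => (continuous_apply i).pow k).sub
      (continuous_const.mul (continuous_finset_prod _ fun j _ => continuous_apply j))
  -- S is compact
  have hSclosed : IsClosed S := isClosed_eq hgcont continuous_const
  have hSbdd : Bornology.IsBounded S := by
    rw [isBounded_iff_forall_norm_le]
    refine ⟨1, fun x hx => ?_⟩
    rw [pi_norm_le_iff_of_nonneg zero_le_one]
    intro i
    have hnn : ∀ j ∈ Finset.univ, (0:ℝ) ≤ x j ^ k := fun j _ => hkeven.pow_nonneg _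
    have hle : x i ^ k ≤ 1 := hx ▸ Finset.single_le_sum hnn (Finset.mem_univ i)
    have : |x i| ^ k ≤ 1 := by rwa [hkeven.pow_abs]
    exact (pow_le_one_iff_of_nonneg (abs_nonneg _) hk0).mp this
  have hScompact : IsCompact S := Metric.isCompact_of_isClosed_isBounded hSclosed hSbdd
  obtain ⟨x₀, hx₀S, hmax⟩ := hScompact.exists_isMaxOn hSne hφcont.continuousOn
  have hgx₀ : g x₀ = 1 := hx₀S
  -- Lagrange multipliers
  have hextr : IsLocalExtrOn (edgeForm k E) {x | g x = g x₀} x₀ := by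
    have : {x | g x = g x₀} = S := by rw [hgx₀]
    rw [this]
    exact Or.inr hmax.localize
  obtain ⟨a, b, hab, heq⟩ := hextr.exists_multipliers_of_hasStrictFDerivAt_1d
    (hasStrict_constraint k x₀) (hasStrict_edgeForm k E x₀)
  have heval : ∀ i : β, a * ((k : ℝ) * x₀ i ^ (k - 1)) + b * ((k : ℝ) * lapAct k E x₀ i) = 0 := by
    intro i
    have := DFunLike.congr_fun heq (Pi.single i 1)
    simpa [powConstraintDeriv_apply_single, edgeFormDeriv_apply_single] using this
  have hx₀ne : x₀ ≠ 0 := by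
    intro h
    rw [h] at hgx₀
    simp [hg, zero_pow hk0] at hgx₀
  have hb : b ≠ 0 := by
    intro hb0
    have ha : a ≠ 0 := by
      intro ha0; exact hab (by simp [ha0, hb0, Prod.ext_iff])
    have hx0 : ∀ i, x₀ i = 0 := by
      intro i
      have := heval i
      rw [hb0, zero_mul, add_zero, mul_eq_zero] at this
      rcases this with h | h
      · exact absurd h ha
      · rw [mul_eq_zero] at h
        rcases h with h | h
        · exact absurd h (by positivity)
        · exact pow_eq_zero_iff (by omega) |>.mp h
    exact hx₀ne (funext hx0)
  have hkR : (k : ℝ) ≠ 0 := Nat.cast_ne_zero.mpr hk0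
  have hlap : ∀ i, lapAct k E x₀ i = (-a / b) * x₀ i ^ (k - 1) := by
    intro i
    have hsum : (k : ℝ) * (a * x₀ i ^ (k - 1) + b * lapAct k E x₀ i) = 0 := by
      linear_combination heval i
    have h2 : a * x₀ i ^ (k - 1) + b * lapAct k E x₀ i = 0 :=
      (mul_eq_zero.mp hsum).resolve_left hkR
    field_simp
    linarith [h2]
  refine ⟨-a / b, ⟨x₀, hx₀ne, hlap⟩, fun x hx => ?_⟩
  have h1 : edgeForm k E x₀ = -a / b := by
    rw [edgeForm_eq_sum_mul_lapAct hk1 hunif]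
    have : ∀ i : β, x₀ i * lapAct k E x₀ i = (-a / b) * x₀ i ^ k := by
      intro i
      rw [hlap i]
      have hpow : x₀ i * x₀ i ^ (k - 1) = x₀ i ^ k := by
        rw [← pow_succ', Nat.sub_add_cancel hk1]
      calc x₀ i * ((-a / b) * x₀ i ^ (k - 1)) = (-a / b) * (x₀ i * x₀ i ^ (k - 1)) := by ring
        _ = (-a / b) * x₀ i ^ k := by rw [hpow]
    rw [Finset.sum_congr rfl fun i _ => this i, ← Finset.mul_sum]
    rw [show (∑ i, x₀ i ^ k) = 1 from hgx₀, mul_one]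
  calc edgeForm k E x ≤ edgeForm k E x₀ := hmax hx
    _ = -a / b := h1
end Extract
section Norm
variable {β : Type*} [Fintype β] [DecidableEq β]

lemma eig_normalized {k : ℕ} (hk : 1 ≤ k) (hkeven : Even k) {E : Finset (Finset β)}
    (hunif : ∀ e ∈ E, e.card = k) {lam : ℝ} (h : IsLapEig k E lam) :
    ∃ x : β → ℝ, (∑ i, x i ^ k) = 1 ∧ edgeForm k E x = lam := by
  obtain ⟨x, hx0, heig⟩ := h
  have hk0 : k ≠ 0 := by omega
  have hkR : (k : ℝ) ≠ 0 := Nat.cast_ne_zero.mpr hk0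
  obtain ⟨i₀, hi₀⟩ : ∃ i, x i ≠ 0 := by
    by_contra hcon; push_neg at hcon; exact hx0 (funext hcon)
  have ht : 0 < ∑ i, x i ^ k :=
    Finset.sum_pos' (fun i _ => hkeven.pow_nonneg _)
      ⟨i₀, Finset.mem_univ _, hkeven.pow_pos hi₀⟩
  set t : ℝ := ∑ i, x i ^ k with hts
  set c : ℝ := t ^ (-(k : ℝ)⁻¹) with hc
  have hck : c ^ k = t⁻¹ := by
    rw [hc, ← Real.rpow_natCast (t ^ (-(k : ℝ)⁻¹)) k, ← Real.rpow_mul ht.le,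
      neg_mul, inv_mul_cancel₀ hkR, Real.rpow_neg_one]
  refine ⟨fun i => c * x i, ?_, ?_⟩
  · rw [Finset.sum_congr rfl (fun i _ => mul_pow c (x i) k), ← Finset.mul_sum, hck,
      inv_mul_cancel₀ ht.ne']
  · rw [edgeForm_smul hunif, hck, edgeForm_eq_sum_mul_lapAct hk hunif]
    have hray : ∀ i ∈ Finset.univ, x i * lapAct k E x i = lam * x i ^ k := by
      intro i _
      rw [heig i]
      have hpow : x i * x i ^ (k - 1) = x i ^ k := by
        rw [← pow_succ', Nat.sub_add_cancel hk]
      calc x i * (lam * x i ^ (k - 1)) = lam * (x i * x i ^ (k - 1)) := by ring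
        _ = lam * x i ^ k := by rw [hpow]
    rw [Finset.sum_congr rfl hray, ← Finset.mul_sum, ← hts,
      show t⁻¹ * (lam * t) = lam * (t⁻¹ * t) from by ring, inv_mul_cancel₀ ht.ne', mul_one]

end Norm
/-- For `k` even and two `k`-uniform hypergraphs `G = (V, E)`,
`G' = (V', E')` with `V ⊆ V'` and `E ⊆ E'`, we have `λ(L) ≤ λ(L')`. -/
theorem largest_lap_eig_monotone_even {k n n' : ℕ} (hk : 3 ≤ k) (hkn : k ≤ n)
    (hkeven : Even k) (hnn : n ≤ n')
    (E : Finset (Finset (Fin n))) (E' : Finset (Finset (Fin n')))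
    (hunif : ∀ e ∈ E, e.card = k) (hunif' : ∀ e ∈ E', e.card = k)
    (hsub : ∀ e ∈ E, e.image (Fin.castLE hnn) ∈ E')
    (lam lam' : ℝ) (hlam : IsLargestLapEig k E lam)
    (hlam' : IsLargestLapEig k E' lam') :
    lam ≤ lam' := by
  have hk2 : 2 ≤ k := by omega
  have hk1 : 1 ≤ k := by omega
  have hk0 : k ≠ 0 := by omega
  haveI : Nonempty (Fin n') := ⟨⟨0, by omega⟩⟩
  obtain ⟨x, hxnorm, hxform⟩ := eig_normalized hk1 hkeven hunif hlam.1
  set ι : Fin n → Fin n' := Fin.castLE hnn with hιdef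
  have hι : Function.Injective ι := Fin.castLE_injective hnn
  set y : Fin n' → ℝ := fun j => if h : (j : ℕ) < n then x ⟨j, h⟩ else 0 with hy
  have hyι : ∀ i : Fin n, y (ι i) = x i := by
    intro i
    show (if h : ((ι i : ℕ)) < n then x ⟨ι i, h⟩ else 0) = x i
    rw [dif_pos (show ((ι i : ℕ)) < n from i.isLt)]
    exact congrArg x (Fin.ext rfl)
  have hyzero : ∀ j : Fin n', j ∉ Finset.univ.image ι → y j = 0 := by
    intro j hj
    have hnot : ¬ (j : ℕ) < n := by
      intro hlt
      exact hj (Finset.mem_image.mpr ⟨⟨j, hlt⟩, Finset.mem_univ _, by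
        ext; simp [hιdef]⟩)
    show (if h : ((j : ℕ)) < n then x ⟨j, h⟩ else 0) = 0
    rw [dif_neg hnot]
  have hynorm : (∑ j, y j ^ k) = 1 := by
    rw [← Finset.sum_subset (Finset.subset_univ (Finset.univ.image ι))
      (fun j _ hj => by rw [hyzero j hj, zero_pow hk0]),
      Finset.sum_image (fun a _ b _ hab => hι hab)]
    rw [Finset.sum_congr rfl (fun i _ => by rw [hyι i])]
    exact hxnorm
  have hterm : ∀ e : Finset (Fin n), edgeTerm k y (e.image ι) = edgeTerm k x e := by
    intro e
    rw [edgeTerm, edgeTerm, Finset.sum_image (fun a _ b _ hab => hι hab),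
      Finset.prod_image (fun a _ b _ hab => hι hab)]
    rw [Finset.sum_congr rfl (fun i _ => by rw [hyι i]),
      Finset.prod_congr rfl (fun i _ => by rw [hyι i])]
  have hE''sub : E.image (fun e => e.image ι) ⊆ E' := by
    intro e' he'
    obtain ⟨e, he, rfl⟩ := Finset.mem_image.mp he'
    exact hsub e he
  have hmono : edgeForm k E x ≤ edgeForm k E' y := by
    calc edgeForm k E x = ∑ e ∈ E.image (fun e => e.image ι), edgeTerm k y e := by
          rw [Finset.sum_image (fun a _ b _ hab => Finset.image_injective hι hab)]
          exact Finset.sum_congr rfl fun e _ => (hterm e).symm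
      _ ≤ edgeForm k E' y := Finset.sum_le_sum_of_subset_of_nonneg hE''sub
          (fun e' he' _ => edgeTerm_nonneg (by omega) hkeven y (hunif' e' he'))
  obtain ⟨mu, hmu_eig, hmu_max⟩ := exists_top_eig hk2 hkeven hunif'
  calc lam = edgeForm k E x := hxform.symm
    _ ≤ edgeForm k E' y := hmono
    _ ≤ mu := hmu_max y hynorm
    _ ≤ lam' := hlam'.2 mu hmu_eig
end

section
/- Let k≥4 be even and let G=(V,E) be a k-uniform connected hypergraph with maximum degree d>0 and Laplacian tensor L. Then λ(L) is equal to the unique real root of the equation (1−λ)^{k−1}(λ−d)+d=0 in the open interval (d,d+1) if and only if G is a hyperstar. -/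
open Finset

variable {α : Type*} [DecidableEq α]

/-! ### Auxiliary machinery for the proof -/

section AuxMachinery

variable {n : ℕ}

lemma swap_sum (E : Finset (Finset (Fin n))) (g : Fin n → Finset (Fin n) → ℝ) :
    ∑ i, ∑ e ∈ E.filter (fun e => i ∈ e), g i e = ∑ e ∈ E, ∑ i ∈ e, g i e := by
  simp_rw [Finset.sum_filter]
  rw [Finset.sum_comm]
  refine Finset.sum_congr rfl fun e _ => ?_
  rw [← Finset.sum_filter]
  congr 1
  simp [Finset.filter_mem_eq_inter]

lemma sum_hdeg_mul (E : Finset (Finset (Fin n))) (f : Fin n → ℝ) :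
    ∑ i, (hdeg E i : ℝ) * f i = ∑ e ∈ E, ∑ j ∈ e, f j := by
  have h : ∀ i, (hdeg E i : ℝ) * f i = ∑ e ∈ E.filter (fun e => i ∈ e), f i := by
    intro i; rw [Finset.sum_const, hdeg]; ring
  simp_rw [h]
  exact swap_sum E (fun i _ => f i)

/-- The polynomial form associated to the Laplacian. -/
def Ffun (k : ℕ) (E : Finset (Finset (Fin n))) (x : Fin n → ℝ) : ℝ :=
  (∑ i, (hdeg E i : ℝ) * x i ^ k) - k * ∑ e ∈ E, ∏ j ∈ e, x j

/-- The `k`-th power sum. -/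
def gfun (k : ℕ) (x : Fin n → ℝ) : ℝ := ∑ i, x i ^ k

lemma Ffun_eq_edges (k : ℕ) (E : Finset (Finset (Fin n))) (x : Fin n → ℝ) :
    Ffun k E x = ∑ e ∈ E, ((∑ j ∈ e, x j ^ k) - k * ∏ j ∈ e, x j) := by
  rw [Ffun, sum_hdeg_mul, Finset.sum_sub_distrib, Finset.mul_sum]

lemma Ffun_eq_lap {k : ℕ} (hk : 1 ≤ k) (E : Finset (Finset (Fin n)))
    (hunif : ∀ e ∈ E, e.card = k) (x : Fin n → ℝ) :
    Ffun k E x = ∑ i, x i * lapAct k E x i := by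
  have hpow : ∀ t : ℝ, t * t ^ (k - 1) = t ^ k := by
    intro t
    rw [← pow_succ']
    congr 1
    omega
  have key : ∀ i, x i * lapAct k E x i
      = (hdeg E i : ℝ) * x i ^ k - ∑ e ∈ E.filter (fun e => i ∈ e), ∏ j ∈ e, x j := by
    intro i
    rw [lapAct, mul_sub, Finset.mul_sum]
    congr 1
    · rw [mul_left_comm, hpow]
    · refine Finset.sum_congr rfl fun e he => ?_
      rw [Finset.mem_filter] at he
      exact Finset.mul_prod_erase e x he.2
  simp_rw [key]
  rw [Finset.sum_sub_distrib, swap_sum E (fun _ e => ∏ j ∈ e, x j), Ffun]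
  congr 1
  rw [Finset.mul_sum]
  refine Finset.sum_congr rfl fun e he => ?_
  rw [Finset.sum_const, hunif e he, nsmul_eq_mul]

lemma Ffun_smul {k : ℕ} (E : Finset (Finset (Fin n))) (hunif : ∀ e ∈ E, e.card = k)
    (t : ℝ) (x : Fin n → ℝ) :
    Ffun k E (t • x) = t ^ k * Ffun k E x := by
  rw [Ffun, Ffun, mul_sub]
  congr 1
  · rw [Finset.mul_sum]
    refine Finset.sum_congr rfl fun i _ => ?_
    simp [mul_pow]; ring
  · rw [Finset.mul_sum, Finset.mul_sum, Finset.mul_sum]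
    refine Finset.sum_congr rfl fun e he => ?_
    have h : ∏ j ∈ e, (t • x) j = t ^ e.card * ∏ j ∈ e, x j := by
      simp [Finset.prod_mul_distrib]
    rw [h, hunif e he]; ring

lemma gfun_smul {k : ℕ} (t : ℝ) (x : Fin n → ℝ) :
    gfun k (t • x) = t ^ k * gfun (n := n) k x := by
  rw [gfun, gfun, Finset.mul_sum]
  refine Finset.sum_congr rfl fun i _ => ?_
  simp [mul_pow]

lemma edge_amgm {k : ℕ} (hk : 0 < k) (hkeven : Even k) (e : Finset (Fin n))
    (he : e.card = k) (x : Fin n → ℝ) :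
    (k : ℝ) * ∏ j ∈ e, x j ≤ ∑ j ∈ e, x j ^ k := by
  have hkR : (0:ℝ) < k := by exact_mod_cast hk
  have h1 : (k:ℝ) * ∏ j ∈ e, x j ≤ (k:ℝ) * ∏ j ∈ e, |x j| := by
    have h2 : ∏ j ∈ e, x j ≤ |∏ j ∈ e, x j| := le_abs_self _
    rw [Finset.abs_prod] at h2
    nlinarith
  have h2 : ∏ j ∈ e, |x j| ≤ ∑ j ∈ e, (1/(k:ℝ)) * |x j| ^ k := by
    have h3 := Real.geom_mean_le_arith_mean_weighted e (fun _ => 1/(k:ℝ))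
      (fun j => |x j| ^ k) (fun _ _ => by positivity)
      (by rw [Finset.sum_const, he, nsmul_eq_mul]; field_simp) (fun j _ => by positivity)
    calc ∏ j ∈ e, |x j| = ∏ j ∈ e, (|x j| ^ k) ^ (1/(k:ℝ)) := by
          refine Finset.prod_congr rfl fun j _ => ?_
          rw [← Real.rpow_natCast |x j| k, ← Real.rpow_mul (abs_nonneg _)]
          rw [mul_one_div, div_self (ne_of_gt hkR), Real.rpow_one]
      _ ≤ ∑ j ∈ e, (1/(k:ℝ)) * |x j| ^ k := h3
  have h3 : ∑ j ∈ e, (1/(k:ℝ)) * |x j| ^ k = (1/(k:ℝ)) * ∑ j ∈ e, x j ^ k := by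
    rw [← Finset.mul_sum]
    congr 1
    exact Finset.sum_congr rfl fun j _ => (hkeven.pow_abs _)
  calc (k:ℝ) * ∏ j ∈ e, x j ≤ (k:ℝ) * ∏ j ∈ e, |x j| := h1
    _ ≤ (k:ℝ) * ((1/(k:ℝ)) * ∑ j ∈ e, x j ^ k) := by rw [← h3]; nlinarith [h2]
    _ = ∑ j ∈ e, x j ^ k := by field_simp

lemma eval_single (c : Fin n → ℝ) (i : Fin n) :
    (∑ j, c j • (ContinuousLinearMap.proj (R := ℝ) (φ := fun _ : Fin n => ℝ) j))
      (Pi.single i 1) = c i := by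
  rw [ContinuousLinearMap.sum_apply]
  rw [Finset.sum_eq_single i]
  · simp
  · intro j _ hj
    simp [Pi.single_apply, hj]
  · intro h; exact absurd (Finset.mem_univ i) h

lemma exists_eig_max {k : ℕ} (hn : 0 < n) (hk : 2 ≤ k) (hkeven : Even k)
    (E : Finset (Finset (Fin n))) (hunif : ∀ e ∈ E, e.card = k) :
    ∃ mu : ℝ, IsLapEig k E mu ∧
      ∀ x : Fin n → ℝ, gfun k x = 1 → Ffun k E x ≤ mu := by
  have hk0 : k ≠ 0 := by omega
  have hkR : (k : ℝ) ≠ 0 := by exact_mod_cast hk0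
  set S : Set (Fin n → ℝ) := {x | gfun k x = 1} with hSdef
  have hgc : Continuous (gfun (n := n) k) :=
    continuous_finset_sum _ (fun i _ => (continuous_apply i).pow k)
  have hFc : Continuous (Ffun k E) := by
    refine Continuous.sub ?_ (continuous_const.mul ?_)
    · exact continuous_finset_sum _ (fun i _ => continuous_const.mul ((continuous_apply i).pow k))
    · exact continuous_finset_sum _ (fun e _ => continuous_finset_prod _ fun j _ => continuous_apply j)
  have hclosed : IsClosed S := isClosed_eq hgc continuous_const
  have hsub : S ⊆ Metric.closedBall 0 1 := by
    intro x hx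
    rw [Metric.mem_closedBall, dist_zero_right]
    refine (pi_norm_le_iff_of_nonneg zero_le_one).2 fun i => ?_
    have h1 : x i ^ k ≤ 1 := by
      have h2 := Finset.single_le_sum (f := fun j => x j ^ k)
        (fun j _ => hkeven.pow_nonneg _) (Finset.mem_univ i)
      rw [show ∑ j, x j ^ k = 1 from hx] at h2
      exact h2
    rw [Real.norm_eq_abs]
    by_contra hgt
    push_neg at hgt
    have h3 : (1:ℝ) < |x i| ^ k := one_lt_pow₀ hgt hk0
    rw [pow_abs, abs_of_nonneg (hkeven.pow_nonneg _)] at h3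
    linarith
  have hcomp : IsCompact S :=
    Metric.isCompact_of_isClosed_isBounded hclosed (Metric.isBounded_closedBall.subset hsub)
  have hne : S.Nonempty := by
    refine ⟨Pi.single (⟨0, hn⟩ : Fin n) 1, ?_⟩
    show gfun k _ = 1
    rw [gfun, Finset.sum_eq_single (⟨0, hn⟩ : Fin n)]
    · simp
    · intro j _ hj
      rw [Pi.single_eq_of_ne hj, zero_pow hk0]
    · intro h; exact absurd (Finset.mem_univ _) h
  obtain ⟨x₀, hx₀S, hmax⟩ := hcomp.exists_isMaxOn hne hFc.continuousOn
  have hgx₀ : gfun k x₀ = 1 := hx₀S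
  have hproj : ∀ i : Fin n, HasStrictFDerivAt (fun x : Fin n → ℝ => x i)
      (ContinuousLinearMap.proj (R := ℝ) (φ := fun _ : Fin n => ℝ) i) x₀ := fun i =>
    (ContinuousLinearMap.proj (R := ℝ) (φ := fun _ : Fin n => ℝ) i).hasStrictFDerivAt
  have hgi : ∀ i : Fin n, HasStrictFDerivAt (fun x : Fin n → ℝ => x i ^ k)
      (((k:ℝ) * x₀ i ^ (k-1)) • ContinuousLinearMap.proj (R := ℝ) (φ := fun _ : Fin n => ℝ) i) x₀ := by
    intro i
    have h := HasStrictDerivAt.comp_hasStrictFDerivAt x₀ (hasStrictDerivAt_pow k (x₀ i)) (hproj i)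
    exact h
  have hg' : HasStrictFDerivAt (gfun (n := n) k)
      (∑ i, ((k:ℝ) * x₀ i ^ (k-1)) • ContinuousLinearMap.proj (R := ℝ) (φ := fun _ : Fin n => ℝ) i) x₀ :=
    HasStrictFDerivAt.fun_sum (fun i _ => hgi i)
  have hF1 : HasStrictFDerivAt (fun x : Fin n → ℝ => ∑ i, (hdeg E i : ℝ) * x i ^ k)
      (∑ i, ((hdeg E i : ℝ) • (((k:ℝ) * x₀ i ^ (k-1)) • ContinuousLinearMap.proj (R := ℝ) (φ := fun _ : Fin n => ℝ) i))) x₀ :=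
    HasStrictFDerivAt.fun_sum (fun i _ => (hgi i).const_mul _)
  have hF2 : HasStrictFDerivAt (fun x : Fin n → ℝ => (k:ℝ) * ∑ e ∈ E, ∏ j ∈ e, x j)
      ((k:ℝ) • ∑ e ∈ E, ∑ j ∈ e, (∏ l ∈ e.erase j, x₀ l) • ContinuousLinearMap.proj (R := ℝ) (φ := fun _ : Fin n => ℝ) j) x₀ := by
    refine HasStrictFDerivAt.const_mul ?_ _
    exact HasStrictFDerivAt.fun_sum (fun e _ => hasStrictFDerivAt_finset_prod)
  have hF0 : HasStrictFDerivAt (Ffun k E) _ x₀ := hF1.sub hF2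
  have hF : HasStrictFDerivAt (Ffun k E)
      (∑ i, ((k:ℝ) * lapAct k E x₀ i) • ContinuousLinearMap.proj (R := ℝ) (φ := fun _ : Fin n => ℝ) i) x₀ := by
    refine hF0.congr_fderiv ?_
    refine ContinuousLinearMap.ext fun v => ?_
    simp only [ContinuousLinearMap.sum_apply, ContinuousLinearMap.smul_apply,
      ContinuousLinearMap.sub_apply, ContinuousLinearMap.proj_apply, smul_eq_mul]
    have hswap := swap_sum E (fun i e => (∏ l ∈ e.erase i, x₀ l) * v i)
    have expand : ∀ i, ((k:ℝ) * lapAct k E x₀ i) * v i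
        = (hdeg E i:ℝ) * ((k:ℝ) * x₀ i ^ (k-1) * v i)
          - (k:ℝ) * ∑ e ∈ E.filter (fun e => i ∈ e), (∏ l ∈ e.erase i, x₀ l) * v i := by
      intro i
      rw [lapAct, ← Finset.sum_mul]
      ring
    simp_rw [expand]
    rw [Finset.sum_sub_distrib]
    congr 1
    rw [show (∑ i, (k:ℝ) * ∑ e ∈ E.filter (fun e => i ∈ e), (∏ l ∈ e.erase i, x₀ l) * v i)
        = (k:ℝ) * ∑ i, ∑ e ∈ E.filter (fun e => i ∈ e), (∏ l ∈ e.erase i, x₀ l) * v i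
        from (Finset.mul_sum _ _ _).symm, hswap]
  have hset : {x : Fin n → ℝ | gfun k x = gfun k x₀} = S := by
    rw [hgx₀]
  have hextr : IsLocalExtrOn (Ffun k E) {x : Fin n → ℝ | gfun k x = gfun k x₀} x₀ := by
    rw [hset]
    exact Or.inr hmax.localize
  obtain ⟨a, b, hab, hrel⟩ := hextr.exists_multipliers_of_hasStrictFDerivAt_1d hg' hF
  have heval : ∀ i : Fin n,
      a * ((k:ℝ) * x₀ i ^ (k-1)) + b * ((k:ℝ) * lapAct k E x₀ i) = 0 := by
    intro i
    have h := congrArg (fun (L : (Fin n → ℝ) →L[ℝ] ℝ) => L (Pi.single i 1)) hrel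
    simp only [ContinuousLinearMap.add_apply, ContinuousLinearMap.smul_apply,
      ContinuousLinearMap.zero_apply, smul_eq_mul] at h
    rwa [eval_single (fun i => (k:ℝ) * x₀ i ^ (k-1)) i,
      eval_single (fun i => (k:ℝ) * lapAct k E x₀ i) i] at h
  have hx₀ne : x₀ ≠ 0 := by
    intro h
    rw [h] at hgx₀
    simp [gfun, zero_pow hk0] at hgx₀
  have hb : b ≠ 0 := by
    intro hb0
    have ha : a ≠ 0 := by
      intro ha0; exact hab (by simp [ha0, hb0, Prod.ext_iff])
    have hz : ∀ i, x₀ i = 0 := by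
      intro i
      have h := heval i
      rw [hb0, zero_mul, add_zero] at h
      have h2 : x₀ i ^ (k-1) = 0 := by
        rcases mul_eq_zero.1 h with h' | h'
        · exact absurd h' ha
        · rcases mul_eq_zero.1 h' with h'' | h''
          · exact absurd h'' hkR
          · exact h''
      exact pow_eq_zero_iff (n := k-1) (by omega) |>.1 h2
    exact hx₀ne (funext hz)
  set mu := -a / b with hmu
  have heig : ∀ i, lapAct k E x₀ i = mu * x₀ i ^ (k-1) := by
    intro i
    have h := heval i
    have h2 : a * x₀ i ^ (k-1) + b * lapAct k E x₀ i = 0 := by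
      have h3 : (k:ℝ) * (a * x₀ i ^ (k-1) + b * lapAct k E x₀ i) = 0 := by
        linear_combination h
      rcases mul_eq_zero.1 h3 with h' | h'
      · exact absurd h' hkR
      · exact h'
    rw [hmu]
    field_simp
    linarith
  refine ⟨mu, ⟨x₀, hx₀ne, heig⟩, fun x hx => ?_⟩
  have hFx₀ : Ffun k E x₀ = mu := by
    rw [Ffun_eq_lap (by omega) E hunif]
    have h4 : ∀ i, x₀ i * lapAct k E x₀ i = mu * x₀ i ^ k := by
      intro i
      rw [heig i, mul_left_comm]
      congr 1
      rw [← pow_succ']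
      congr 1
      omega
    simp_rw [h4]
    rw [← Finset.mul_sum]
    rw [show ∑ i, x₀ i ^ k = 1 from hgx₀, mul_one]
  calc Ffun k E x ≤ Ffun k E x₀ := hmax hx
    _ = mu := hFx₀

lemma Ffun_le_lam {k : ℕ} (hn : 0 < n) (hk : 2 ≤ k) (hkeven : Even k)
    (E : Finset (Finset (Fin n))) (hunif : ∀ e ∈ E, e.card = k)
    (lam : ℝ) (hlam : IsLargestLapEig k E lam)
    (x : Fin n → ℝ) (hx : x ≠ 0) :
    Ffun k E x ≤ lam * gfun k x := by
  obtain ⟨mu, hmueig, hmu⟩ := exists_eig_max hn hk hkeven E hunif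
  have hmulam : mu ≤ lam := hlam.2 mu hmueig
  have hs : 0 < gfun k x := by
    obtain ⟨i, hi⟩ : ∃ i, x i ≠ 0 := by
      by_contra hno; push_neg at hno; exact hx (funext hno)
    exact Finset.sum_pos' (fun j _ => hkeven.pow_nonneg _)
      ⟨i, Finset.mem_univ i, hkeven.pow_pos hi⟩
  set s := gfun k x with hsdef
  set t : ℝ := (s⁻¹) ^ ((k:ℝ)⁻¹) with ht
  have hkR : (k:ℝ) ≠ 0 := Nat.cast_ne_zero.mpr (by omega)
  have htk : t ^ k = s⁻¹ := by
    rw [ht, ← Real.rpow_natCast ((s⁻¹) ^ ((k:ℝ)⁻¹)) k, ← Real.rpow_mul (le_of_lt (inv_pos.2 hs)),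
      inv_mul_cancel₀ hkR, Real.rpow_one]
  have hg1 : gfun k (t • x) = 1 := by
    rw [gfun_smul, htk, ← hsdef, inv_mul_cancel₀ (ne_of_gt hs)]
  have h1 := hmu (t • x) hg1
  rw [Ffun_smul E hunif, htk] at h1
  have h2 : s * (s⁻¹ * Ffun k E x) ≤ s * mu := mul_le_mul_of_nonneg_left h1 (le_of_lt hs)
  calc Ffun k E x = s * (s⁻¹ * Ffun k E x) := by field_simp
    _ ≤ s * mu := h2
    _ ≤ s * lam := mul_le_mul_of_nonneg_left hmulam (le_of_lt hs)
    _ = lam * s := mul_comm _ _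

lemma hyperstar_lam {k d : ℕ} (hk : 4 ≤ k) (hkeven : Even k) (hd : 0 < d)
    (E : Finset (Finset (Fin n))) (hunif : ∀ e ∈ E, e.card = k)
    (hstar : IsHyperstar k d E) (r lam : ℝ)
    (hrd : (d : ℝ) < r) (hreq : (1 - r) ^ (k - 1) * (r - (d : ℝ)) + (d : ℝ) = 0)
    (hlam : IsLargestLapEig k E lam) : lam = r := by
  obtain ⟨h, P, hhP, hPcard, hPdisj, hPcover, hE⟩ := hstar
  have hk1 : 1 ≤ k := by omega
  have hkm1 : k - 1 ≠ 0 := by omega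
  have hd1 : (1 : ℝ) ≤ d := by exact_mod_cast hd
  have hr1 : (1 : ℝ) < r := lt_of_le_of_lt hd1 hrd
  have hodd : Odd (k - 1) := by obtain ⟨m, hm⟩ := hkeven; exact ⟨m - 1, by omega⟩
  have hneg1r : (1 - r) ^ (k - 1) = -((r - 1) ^ (k - 1)) := by
    rw [show (1 - r) = -(r - 1) by ring, hodd.neg_pow]
  have hreq' : (r - 1) ^ (k - 1) * (r - d) = d := by
    rw [hneg1r] at hreq; linarith
  -- structural facts
  have hinj : Function.Injective (fun i : Fin d => insert h (P i)) := by
    intro i j hij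
    by_contra hne
    have hPij : P i = P j := by
      have h2 : (insert h (P i)).erase h = (insert h (P j)).erase h := by
        simp only at hij; rw [hij]
      rwa [Finset.erase_insert (hhP i), Finset.erase_insert (hhP j)] at h2
    have hdisj := hPdisj i j hne
    rw [hPij] at hdisj
    have hempty : P j = ∅ := disjoint_self.1 hdisj
    have hcard := hPcard j
    rw [hempty] at hcard
    simp at hcard
    omega
  have hmemE : ∀ e, e ∈ E ↔ ∃ i, e = insert h (P i) := by
    intro e; rw [hE, Finset.mem_image]
    constructor
    · rintro ⟨i, _, rfl⟩; exact ⟨i, rfl⟩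
    · rintro ⟨i, rfl⟩; exact ⟨i, Finset.mem_univ i, rfl⟩
  have hEcard : E.card = d := by
    rw [hE, Finset.card_image_of_injective _ hinj, Finset.card_univ, Fintype.card_fin]
  have hfilter_h : E.filter (fun e => h ∈ e) = E := by
    refine Finset.filter_true_of_mem (fun e he => ?_)
    obtain ⟨i, rfl⟩ := (hmemE e).1 he
    exact Finset.mem_insert_self _ _
  have hdeg_h : hdeg E h = d := by rw [hdeg, hfilter_h, hEcard]
  have hPne : ∀ i, (P i).Nonempty := fun i => Finset.card_pos.1 (by rw [hPcard i]; omega)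
  have hvh : ∀ i, ∀ v ∈ P i, v ≠ h := fun i v hv hveq => hhP i (hveq ▸ hv)
  have hfilter_v : ∀ i, ∀ v ∈ P i, E.filter (fun e => v ∈ e) = {insert h (P i)} := by
    intro i v hv
    ext e
    rw [Finset.mem_filter, Finset.mem_singleton]
    constructor
    · rintro ⟨he, hve⟩
      obtain ⟨j, rfl⟩ := (hmemE e).1 he
      rcases Finset.mem_insert.1 hve with hveq | hvPj
      · exact absurd hveq (hvh i v hv)
      · have hji : j = i := by
          by_contra hji
          exact (Finset.disjoint_left.1 (hPdisj j i hji)) hvPj hv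
        rw [hji]
    · rintro rfl
      exact ⟨(hmemE _).2 ⟨i, rfl⟩, Finset.mem_insert_of_mem hv⟩
  have hdeg_v : ∀ i, ∀ v ∈ P i, hdeg E v = 1 := fun i v hv => by
    rw [hdeg, hfilter_v i v hv, Finset.card_singleton]
  have hsum_heart : ∀ y : Fin n → ℝ,
      ∑ e ∈ E.filter (fun e => h ∈ e), ∏ j ∈ e.erase h, y j = ∑ i : Fin d, ∏ j ∈ P i, y j := by
    intro y
    rw [hfilter_h, hE, Finset.sum_image (fun a _ b _ hab => hinj hab)]
    refine Finset.sum_congr rfl fun i _ => ?_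
    rw [Finset.erase_insert (hhP i)]
  have hlap_heart : ∀ y : Fin n → ℝ,
      lapAct k E y h = d * y h ^ (k - 1) - ∑ i : Fin d, ∏ j ∈ P i, y j := by
    intro y; rw [lapAct, hdeg_h, hsum_heart]
  have hlap_leaf : ∀ (y : Fin n → ℝ) (i) (v), v ∈ P i →
      lapAct k E y v = y v ^ (k - 1) - y h * ∏ j ∈ (P i).erase v, y j := by
    intro y i v hv
    rw [lapAct, hdeg_v i v hv, hfilter_v i v hv, Finset.sum_singleton]
    have hvne : v ≠ h := hvh i v hv
    have hins : (insert h (P i)).erase v = insert h ((P i).erase v) :=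
      Finset.erase_insert_of_ne hvne.symm
    rw [hins, Finset.prod_insert (fun hmem => hhP i (Finset.mem_of_mem_erase hmem))]
    push_cast
    ring
  -- Part 1 : r is an eigenvalue
  have hxr : IsLapEig k E r := by
    set x : Fin n → ℝ := fun v => if v = h then 1 - r else 1 with hxdef
    have hxh : x h = 1 - r := if_pos rfl
    have hxl : ∀ v, v ≠ h → x v = 1 := fun v hv => if_neg hv
    refine ⟨x, ?_, ?_⟩
    · obtain ⟨v, hv⟩ := hPne ⟨0, hd⟩
      intro hzero
      have h2 : x v = 0 := congrFun hzero v
      rw [hxl v (hvh _ v hv)] at h2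
      norm_num at h2
    · intro v
      by_cases hvh' : v = h
      · subst hvh'
        rw [hlap_heart, hxh]
        have hone : ∀ i : Fin d, ∏ j ∈ P i, x j = 1 := fun i =>
          Finset.prod_eq_one (fun j hj => hxl j (hvh i j hj))
        simp_rw [hone]
        rw [Finset.sum_const, Finset.card_univ, Fintype.card_fin, nsmul_eq_mul, mul_one]
        rw [hneg1r]
        linear_combination hreq'
      · obtain ⟨i, hvi⟩ := hPcover v hvh'
        rw [hlap_leaf x i v hvi, hxh, hxl v hvh']
        have hone : ∏ j ∈ (P i).erase v, x j = 1 :=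
          Finset.prod_eq_one (fun j hj => hxl j (hvh i j (Finset.mem_of_mem_erase hj)))
        rw [hone, one_pow, mul_one]
        ring
  have hrle : r ≤ lam := hlam.2 r hxr
  -- Part 2 : lam ≤ r
  have hlamle : lam ≤ r := by
    rcases le_or_gt lam (d : ℝ) with hle | hmu_gt
    · linarith
    · obtain ⟨y₀, hy0ne, heig0⟩ := hlam.1
      have hmu1 : (1 : ℝ) < lam := lt_of_le_of_lt hd1 hmu_gt
      have h1lam : (1 : ℝ) - lam ≠ 0 := by linarith
      -- y h ≠ 0 for any eigenvector
      have hyh0 : ∀ y : Fin n → ℝ, (∀ i, lapAct k E y i = lam * y i ^ (k - 1)) → y h = 0 → y = 0 := by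
        intro y heig hy
        funext v
        show y v = 0
        by_cases hvh' : v = h
        · rw [hvh', hy]
        · obtain ⟨i, hvi⟩ := hPcover v hvh'
          have h2 := heig v
          rw [hlap_leaf y i v hvi, hy, zero_mul] at h2
          have h3 : (1 - lam) * y v ^ (k - 1) = 0 := by linarith
          have h4 : y v ^ (k - 1) = 0 := by
            rcases mul_eq_zero.1 h3 with h' | h'
            · exact absurd h' h1lam
            · exact h'
          exact pow_eq_zero_iff hkm1 |>.1 h4
      -- negation of eigenvector is eigenvector
      have hneg_eig : ∀ y : Fin n → ℝ, (∀ i, lapAct k E y i = lam * y i ^ (k - 1)) →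
          ∀ i, lapAct k E (-y) i = lam * (-y) i ^ (k - 1) := by
        intro y heig i
        have h1 : (-y) i ^ (k - 1) = -(y i ^ (k - 1)) := by
          rw [Pi.neg_apply, hodd.neg_pow]
        have hprod : ∀ e ∈ E.filter (fun e => i ∈ e),
            ∏ j ∈ e.erase i, (-y) j = -(∏ j ∈ e.erase i, y j) := by
          intro e he
          rw [Finset.mem_filter] at he
          have hcard : (e.erase i).card = k - 1 := by
            rw [Finset.card_erase_of_mem he.2, hunif e he.1]
          calc ∏ j ∈ e.erase i, (-y) j = ∏ j ∈ e.erase i, (-1 : ℝ) * y j := by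
                refine Finset.prod_congr rfl fun j _ => ?_
                rw [Pi.neg_apply]; ring
            _ = (-1 : ℝ) ^ (e.erase i).card * ∏ j ∈ e.erase i, y j := by
                rw [Finset.prod_mul_distrib, Finset.prod_const]
            _ = -(∏ j ∈ e.erase i, y j) := by rw [hcard, hodd.neg_one_pow]; ring
        have h2 : lapAct k E (-y) i = -(lapAct k E y i) := by
          rw [lapAct, lapAct, h1, Finset.sum_congr rfl hprod, Finset.sum_neg_distrib]
          ring
        rw [h2, heig i, h1]
        ring
      obtain ⟨z, hz_eig, hzh⟩ : ∃ z : Fin n → ℝ,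
          (∀ i, lapAct k E z i = lam * z i ^ (k - 1)) ∧ 0 < z h := by
        have hy0h : y₀ h ≠ 0 := fun h0 => hy0ne (hyh0 y₀ heig0 h0)
        rcases lt_or_gt_of_ne hy0h with hneg | hpos
        · exact ⟨-y₀, hneg_eig y₀ heig0, by simpa using hneg⟩
        · exact ⟨y₀, heig0, hpos⟩
      set q : Fin d → ℝ := fun i => ∏ j ∈ P i, z j with hq
      set c : Fin d → ℝ := fun i => z h * q i / (1 - lam) with hc
      have hleafk : ∀ i, ∀ v ∈ P i, z v ^ k = c i := by
        intro i v hv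
        have h2 := hz_eig v
        rw [hlap_leaf z i v hv] at h2
        have hzk : z v * z v ^ (k - 1) = z v ^ k := by
          rw [← pow_succ']; congr 1; omega
        have hpe : z v * ∏ j ∈ (P i).erase v, z j = q i := Finset.mul_prod_erase (P i) z hv
        have h4 : (1 - lam) * z v ^ (k - 1) = z h * ∏ j ∈ (P i).erase v, z j := by linarith
        have hmul : (1 - lam) * z v ^ k = z h * q i := by
          calc (1 - lam) * z v ^ k = z v * ((1 - lam) * z v ^ (k - 1)) := by
                rw [← hzk]; ring
            _ = z v * (z h * ∏ j ∈ (P i).erase v, z j) := by rw [h4]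
            _ = z h * q i := by rw [← hpe]; ring
        rw [hc]
        field_simp
        linarith [hmul]
      have hcnonneg : ∀ i, 0 ≤ c i := by
        intro i
        obtain ⟨v, hv⟩ := hPne i
        rw [← hleafk i v hv]
        exact hkeven.pow_nonneg _
      have hqk : ∀ i, q i ^ k = c i ^ (k - 1) := by
        intro i
        calc q i ^ k = ∏ j ∈ P i, z j ^ k := by rw [hq]; exact (Finset.prod_pow _ _ _).symm
          _ = ∏ _j ∈ P i, c i := Finset.prod_congr rfl (fun v hv => hleafk i v hv)
          _ = c i ^ (k - 1) := by rw [Finset.prod_const, hPcard i]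
      have hsumq : ∀ i, z h * q i = (1 - lam) * c i := by
        intro i; rw [hc]; field_simp
      have hkey : ∀ i, (lam - 1) ^ k * c i ≤ z h ^ k := by
        intro i
        by_cases hci : c i = 0
        · rw [hci, mul_zero]; exact hkeven.pow_nonneg _
        · have h6 : ((1 - lam) * c i) ^ k = z h ^ k * c i ^ (k - 1) := by
            rw [← hsumq i, mul_pow, hqk]
          have h7 : ((1 - lam) : ℝ) ^ k = (lam - 1) ^ k := by
            rw [show (1 - lam) = -(lam - 1) by ring, hkeven.neg_pow]
          have hck : c i ^ k = c i * c i ^ (k - 1) := by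
            rw [← pow_succ']; congr 1; omega
          have h8 : ((lam - 1) ^ k * c i) * c i ^ (k - 1) = z h ^ k * c i ^ (k - 1) := by
            rw [← h6, mul_pow, h7, hck]; ring
          exact le_of_eq (mul_right_cancel₀ (pow_ne_zero _ hci) h8)
      have hheart := hz_eig h
      rw [hlap_heart z] at hheart
      have hzhk : z h * z h ^ (k - 1) = z h ^ k := by
        rw [← pow_succ']; congr 1; omega
      have hheart2 : (lam - d) * z h ^ k = (lam - 1) * ∑ i, c i := by
        have h9 : z h * ((d : ℝ) * z h ^ (k - 1) - ∑ i : Fin d, q i)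
            = z h * (lam * z h ^ (k - 1)) := by rw [← hheart]
        rw [mul_sub, Finset.mul_sum] at h9
        simp_rw [hsumq] at h9
        have e1 : z h * ((d : ℝ) * z h ^ (k - 1)) = d * z h ^ k := by rw [← hzhk]; ring
        have e2 : z h * (lam * z h ^ (k - 1)) = lam * z h ^ k := by rw [← hzhk]; ring
        rw [e1, e2, ← Finset.mul_sum] at h9
        linear_combination -h9
      have hsum_le : ∑ i, (lam - 1) ^ k * c i ≤ ∑ _i : Fin d, z h ^ k :=
        Finset.sum_le_sum (fun i _ => hkey i)
      have hzhpos : 0 < z h ^ k := hkeven.pow_pos (ne_of_gt hzh)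
      have hfin : (lam - d) * (lam - 1) ^ (k - 1) ≤ d := by
        have e4 : ∑ _i : Fin d, z h ^ k = d * z h ^ k := by
          rw [Finset.sum_const, Finset.card_univ, Fintype.card_fin, nsmul_eq_mul]
        have e6 : (lam - 1) ^ k = (lam - 1) ^ (k - 1) * (lam - 1) := by
          rw [← pow_succ]; congr 1; omega
        have e7 : ∑ i, (lam - 1) ^ k * c i = ((lam - d) * (lam - 1) ^ (k - 1)) * z h ^ k := by
          rw [← Finset.mul_sum, e6]
          calc (lam - 1) ^ (k - 1) * (lam - 1) * ∑ i, c i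
              = (lam - 1) ^ (k - 1) * ((lam - 1) * ∑ i, c i) := by ring
            _ = (lam - 1) ^ (k - 1) * ((lam - d) * z h ^ k) := by rw [← hheart2]
            _ = ((lam - d) * (lam - 1) ^ (k - 1)) * z h ^ k := by ring
        rw [e7, e4] at hsum_le
        exact le_of_mul_le_mul_right hsum_le hzhpos
      by_contra hgt
      push_neg at hgt
      have hrpow : (r - 1) ^ (k - 1) < (lam - 1) ^ (k - 1) :=
        pow_lt_pow_left₀ (by linarith) (by linarith) hkm1
      have hmul2 : (r - d) * (r - 1) ^ (k - 1) < (lam - d) * (lam - 1) ^ (k - 1) :=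
        mul_lt_mul'' (by linarith) hrpow (by linarith)
          (pow_nonneg (by linarith) _)
      have hreq'' : (r - d) * (r - 1) ^ (k - 1) = d := by rw [mul_comm]; exact hreq'
      linarith
  exact le_antisymm hlamle hrle

lemma gfun_supp {k : ℕ} (hk0 : k ≠ 0) (x : Fin n → ℝ) (s : Finset (Fin n))
    (h0 : ∀ j, j ∉ s → x j = 0) : gfun k x = ∑ j ∈ s, x j ^ k :=
  (Finset.sum_subset (Finset.subset_univ s)
    (fun j _ hj => by rw [h0 j hj, zero_pow hk0])).symm

lemma F_ge_subset {k : ℕ} (hk0 : 0 < k) (hkeven : Even k)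
    (E E' : Finset (Finset (Fin n))) (hunif : ∀ e ∈ E, e.card = k) (hsub : E' ⊆ E)
    (x : Fin n → ℝ) :
    ∑ e ∈ E', ((∑ j ∈ e, x j ^ k) - k * ∏ j ∈ e, x j) ≤ Ffun k E x := by
  rw [Ffun_eq_edges]
  refine Finset.sum_le_sum_of_subset_of_nonneg hsub (fun e he _ => ?_)
  linarith [edge_amgm hk0 hkeven e (hunif e he) x]

lemma starEdges_sum {k d : ℕ} (hk : 4 ≤ k) (hkeven : Even k)
    (E : Finset (Finset (Fin n))) (hunif : ∀ e ∈ E, e.card = k)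
    (i0 : Fin n) (hdeg0 : hdeg E i0 = d) (r : ℝ) (x : Fin n → ℝ)
    (hxi0 : x i0 = -(r-1))
    (hsq : ∀ e ∈ E.filter (fun e => i0 ∈ e), ∀ j ∈ e.erase i0, x j ^ k = 1)
    (hprod : ∀ e ∈ E.filter (fun e => i0 ∈ e), ∏ j ∈ e.erase i0, x j = 1) :
    ∑ e ∈ E.filter (fun e => i0 ∈ e), ((∑ j ∈ e, x j ^ k) - k * ∏ j ∈ e, x j)
      = d * ((r-1)^k + ((k:ℝ)-1) + k*(r-1)) := by
  have hconst : ∀ e ∈ E.filter (fun e => i0 ∈ e),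
      ((∑ j ∈ e, x j ^ k) - k * ∏ j ∈ e, x j) = (r-1)^k + ((k:ℝ)-1) + k*(r-1) := by
    intro e he
    have heE := (Finset.mem_filter.1 he).1
    have hi0e := (Finset.mem_filter.1 he).2
    have hsum : ∑ j ∈ e, x j ^ k = (r-1)^k + ((k:ℝ)-1) := by
      rw [← Finset.add_sum_erase _ _ hi0e, hxi0, hkeven.neg_pow]
      congr 1
      rw [Finset.sum_congr rfl (hsq e he), Finset.sum_const, nsmul_eq_mul, mul_one,
        Finset.card_erase_of_mem hi0e, hunif e heE, Nat.cast_sub (by omega : 1 ≤ k),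
        Nat.cast_one]
    have hpr : ∏ j ∈ e, x j = -(r-1) := by
      rw [← Finset.mul_prod_erase _ _ hi0e, hprod e he, hxi0, mul_one]
    rw [hsum, hpr]
    ring
  rw [Finset.sum_congr rfl hconst, Finset.sum_const, nsmul_eq_mul,
    show (E.filter (fun e => i0 ∈ e)).card = d from hdeg0]

lemma N_card_le {k d : ℕ} (E : Finset (Finset (Fin n))) (hunif : ∀ e ∈ E, e.card = k)
    (i0 : Fin n) (hdeg0 : hdeg E i0 = d) :
    ((E.filter (fun e => i0 ∈ e)).biUnion (fun e => e.erase i0)).card ≤ d * (k - 1) := by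
  calc ((E.filter (fun e => i0 ∈ e)).biUnion (fun e => e.erase i0)).card
      ≤ ∑ e ∈ E.filter (fun e => i0 ∈ e), (e.erase i0).card := Finset.card_biUnion_le
    _ = ∑ _e ∈ E.filter (fun e => i0 ∈ e), (k - 1) := by
        refine Finset.sum_congr rfl fun e he => ?_
        rw [Finset.card_erase_of_mem (Finset.mem_filter.1 he).2,
          hunif e (Finset.mem_filter.1 he).1]
    _ = d * (k - 1) := by
        rw [Finset.sum_const, smul_eq_mul, show (E.filter (fun e => i0 ∈ e)).card = d from hdeg0]

lemma key_identity {k d : ℕ} (hk : 4 ≤ k) {r : ℝ}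
    (hreq' : (r-1)^(k-1) * (r - (d:ℝ)) = (d:ℝ)) :
    (d:ℝ) * ((r-1)^k + ((k:ℝ)-1) + k*(r-1)) = r * ((r-1)^k + d*((k:ℝ)-1)) := by
  have hp : (r-1)^k = (r-1)^(k-1) * (r-1) := by
    rw [← pow_succ]; congr 1; omega
  rw [hp]
  linear_combination ((1:ℝ)-r) * hreq'

lemma transGen_first {α : Type*} {r : α → α → Prop} {a b : α}
    (h : Relation.TransGen r a b) : ∃ c, r a c := by
  induction h with
  | single h => exact ⟨_, h⟩
  | tail _ _ ih => exact ih

lemma reach_lemma (E : Finset (Finset (Fin n)))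
    (hconn : IsConnectedH E) (i0 : Fin n)
    (e0 : Finset (Fin n)) (he0 : e0 ∈ E) (hi0e0 : i0 ∉ e0) (he0ne : e0.Nonempty) :
    ∃ e2 ∈ E, i0 ∉ e2 ∧
      (e2 ∩ ((E.filter (fun e => i0 ∈ e)).biUnion (fun e => e.erase i0))).Nonempty := by
  by_contra hno
  push_neg at hno
  set N := (E.filter (fun e => i0 ∈ e)).biUnion (fun e => e.erase i0) with hN
  obtain ⟨w, hw⟩ := he0ne
  have hwi0 : w ≠ i0 := fun h => hi0e0 (h ▸ hw)
  have hreach : ∀ b, Relation.TransGen (fun a b : Fin n => ∃ e ∈ E, a ∈ e ∧ b ∈ e) i0 b →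
      b ∈ insert i0 N := by
    intro b htg
    induction htg with
    | single hrel =>
        rename_i b'
        obtain ⟨e, he, hi0e, hbe⟩ := hrel
        by_cases hbi0 : b' = i0
        · rw [hbi0]; exact Finset.mem_insert_self _ _
        · exact Finset.mem_insert_of_mem (Finset.mem_biUnion.2
            ⟨e, Finset.mem_filter.2 ⟨he, hi0e⟩, Finset.mem_erase.2 ⟨hbi0, hbe⟩⟩)
    | tail hpre hrel ih =>
        rename_i b' c'
        obtain ⟨e, he, hbe, hce⟩ := hrel
        by_cases hi0e : i0 ∈ e
        · by_cases hci0 : c' = i0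
          · rw [hci0]; exact Finset.mem_insert_self _ _
          · exact Finset.mem_insert_of_mem (Finset.mem_biUnion.2
              ⟨e, Finset.mem_filter.2 ⟨he, hi0e⟩, Finset.mem_erase.2 ⟨hci0, hce⟩⟩)
        · exfalso
          rcases Finset.mem_insert.1 ih with hb | hb
          · exact hi0e (hb ▸ hbe)
          · exact Finset.nonempty_iff_ne_empty.1 ⟨b', Finset.mem_inter.2 ⟨hbe, hb⟩⟩ (hno e he hi0e)
  have hwN := hreach w (hconn i0 w (Ne.symm hwi0))
  rcases Finset.mem_insert.1 hwN with h | h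
  · exact hwi0 h
  · exact Finset.nonempty_iff_ne_empty.1 ⟨w, Finset.mem_inter.2 ⟨hw, h⟩⟩ (hno e0 he0 hi0e0)

lemma caseA {k d : ℕ} (hk : 4 ≤ k) (hkeven : Even k) (hd : 0 < d)
    (E : Finset (Finset (Fin n))) (hunif : ∀ e ∈ E, e.card = k)
    {r : ℝ} (hrd : (d:ℝ) < r) (hd1 : (1:ℝ) ≤ (d:ℝ))
    (hreq' : (r-1)^(k-1) * (r - (d:ℝ)) = (d:ℝ))
    (FleR : ∀ x : Fin n → ℝ, x ≠ 0 → Ffun k E x ≤ r * gfun k x)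
    (i0 : Fin n) (hdeg0 : hdeg E i0 = d)
    (e1 e2 : Finset (Fin n)) (he1 : e1 ∈ E) (he2 : e2 ∈ E) (hne : e1 ≠ e2)
    (hi01 : i0 ∈ e1) (hi02 : i0 ∈ e2)
    (v : Fin n) (hv1 : v ∈ e1) (hv2 : v ∈ e2) (hvi0 : v ≠ i0) : False := by
  have hk0 : k ≠ 0 := by omega
  have hr1 : (1:ℝ) < r := lt_of_le_of_lt hd1 hrd
  set Star := E.filter (fun e => i0 ∈ e) with hStar
  set N := Star.biUnion (fun e => e.erase i0) with hN
  have hi0N : i0 ∉ N := by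
    intro hmem
    obtain ⟨e, _, he2'⟩ := Finset.mem_biUnion.1 hmem
    exact (Finset.mem_erase.1 he2').1 rfl
  set x : Fin n → ℝ := fun j => if j = i0 then -(r-1) else if j ∈ N then 1 else 0 with hx
  have hxi0 : x i0 = -(r-1) := by rw [hx]; simp
  have hxN : ∀ j ∈ N, x j = 1 := by
    intro j hj
    have hji0 : j ≠ i0 := fun h => hi0N (h ▸ hj)
    rw [hx]; simp only
    rw [if_neg hji0, if_pos hj]
  have hx0 : ∀ j, j ∉ insert i0 N → x j = 0 := by
    intro j hj
    rw [Finset.mem_insert] at hj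
    push_neg at hj
    rw [hx]; simp only
    rw [if_neg hj.1, if_neg hj.2]
  have hxne : x ≠ 0 := by
    intro h
    have h2 := congrFun h i0
    rw [hxi0] at h2
    simp only [Pi.zero_apply] at h2
    linarith
  have herasesub : ∀ e ∈ Star, ∀ j ∈ e.erase i0, j ∈ N :=
    fun e he j hj => Finset.mem_biUnion.2 ⟨e, he, hj⟩
  have hsq : ∀ e ∈ Star, ∀ j ∈ e.erase i0, x j ^ k = 1 := by
    intro e he j hj
    rw [hxN j (herasesub e he j hj), one_pow]
  have hprod : ∀ e ∈ Star, ∏ j ∈ e.erase i0, x j = 1 := by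
    intro e he
    exact Finset.prod_eq_one (fun j hj => hxN j (herasesub e he j hj))
  have hstarval := starEdges_sum hk hkeven E hunif i0 hdeg0 r x hxi0 hsq hprod
  have hgf : gfun k x = (r-1)^k + N.card := by
    rw [gfun_supp hk0 x (insert i0 N) hx0, Finset.sum_insert hi0N, hxi0, hkeven.neg_pow]
    congr 1
    rw [Finset.sum_congr rfl (fun j hj => by rw [hxN j hj, one_pow]), Finset.sum_const,
      nsmul_eq_mul, mul_one]
  -- sharp bound on N.card
  have hsharp : (N.card : ℝ) ≤ (d:ℝ) * ((k:ℝ)-1) - 1 := by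
    set A := (Star.erase e2).biUnion (fun e => e.erase i0) with hA
    set B := e2.erase i0 with hB
    have he2Star : e2 ∈ Star := Finset.mem_filter.2 ⟨he2, hi02⟩
    have he1Star : e1 ∈ Star := Finset.mem_filter.2 ⟨he1, hi01⟩
    have hNAB : N = B ∪ A := by
      rw [hN, ← Finset.insert_erase he2Star, Finset.biUnion_insert]
    have hvA : v ∈ A := Finset.mem_biUnion.2
      ⟨e1, Finset.mem_erase.2 ⟨hne, he1Star⟩, Finset.mem_erase.2 ⟨hvi0, hv1⟩⟩
    have hcardA : A.card ≤ (d-1) * (k-1) := by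
      calc A.card ≤ ∑ e ∈ Star.erase e2, (e.erase i0).card := Finset.card_biUnion_le
        _ = ∑ _e ∈ Star.erase e2, (k-1) := by
            refine Finset.sum_congr rfl fun e he => ?_
            have heS := Finset.mem_of_mem_erase he
            rw [Finset.card_erase_of_mem (Finset.mem_filter.1 heS).2,
              hunif e (Finset.mem_filter.1 heS).1]
        _ = (d-1) * (k-1) := by
            rw [Finset.sum_const, smul_eq_mul, Finset.card_erase_of_mem he2Star,
              show Star.card = d from hdeg0]
    have hBsub : B \ A ⊆ B.erase v := by
      intro w hw
      rw [Finset.mem_sdiff] at hw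
      exact Finset.mem_erase.2 ⟨fun h => hw.2 (h ▸ hvA), hw.1⟩
    have hcardBA : (B \ A).card ≤ k - 2 := by
      calc (B \ A).card ≤ (B.erase v).card := Finset.card_le_card hBsub
        _ = k - 2 := by
            rw [Finset.card_erase_of_mem (Finset.mem_erase.2 ⟨hvi0, hv2⟩)]
            rw [Finset.card_erase_of_mem hi02, hunif e2 he2]
            omega
    have hν : N.card ≤ (d-1)*(k-1) + (k-2) := by
      calc N.card = (A ∪ (B \ A)).card := by
            rw [hNAB, Finset.union_sdiff_self_eq_union, Finset.union_comm]
        _ ≤ A.card + (B \ A).card := Finset.card_union_le _ _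
        _ ≤ (d-1)*(k-1) + (k-2) := add_le_add hcardA hcardBA
    have h' : (N.card:ℝ) ≤ (((d-1)*(k-1) + (k-2) : ℕ) : ℝ) := by exact_mod_cast hν
    have hcast : (((d-1)*(k-1) + (k-2) : ℕ) : ℝ)
        = ((d:ℝ)-1)*((k:ℝ)-1) + ((k:ℝ)-2) := by
      rw [Nat.cast_add, Nat.cast_mul, Nat.cast_sub (by omega : 1 ≤ d),
        Nat.cast_sub (by omega : 1 ≤ k), Nat.cast_sub (by omega : 2 ≤ k),
        Nat.cast_one, Nat.cast_two]
    rw [hcast] at h'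
    have hring : ((d:ℝ)-1)*((k:ℝ)-1) + ((k:ℝ)-2) = (d:ℝ)*((k:ℝ)-1) - 1 := by ring
    linarith
  have hFge := F_ge_subset (by omega : 0 < k) hkeven E Star hunif (Finset.filter_subset _ _) x
  rw [hstarval] at hFge
  have hFle := FleR x hxne
  rw [hgf] at hFle
  have hkey := key_identity hk (d := d) hreq'
  have hrpos : (0:ℝ) < r := by linarith
  have h5 : r * ((r-1)^k + (d:ℝ)*((k:ℝ)-1)) ≤ r * ((r-1)^k + (N.card:ℝ)) := by linarith
  have h6 : (r-1)^k + (d:ℝ)*((k:ℝ)-1) ≤ (r-1)^k + (N.card:ℝ) :=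
    le_of_mul_le_mul_left h5 hrpos
  linarith

lemma caseB2 {k d : ℕ} (hk : 4 ≤ k) (hkeven : Even k) (hd : 0 < d)
    (E : Finset (Finset (Fin n))) (hunif : ∀ e ∈ E, e.card = k)
    {r : ℝ} (hrd : (d:ℝ) < r) (hd1 : (1:ℝ) ≤ (d:ℝ))
    (hreq' : (r-1)^(k-1) * (r - (d:ℝ)) = (d:ℝ))
    (FleR : ∀ x : Fin n → ℝ, x ≠ 0 → Ffun k E x ≤ r * gfun k x)
    (i0 : Fin n) (hdeg0 : hdeg E i0 = d)
    (hA : ∀ f1 ∈ E, ∀ f2 ∈ E, f1 ≠ f2 → i0 ∈ f1 → i0 ∈ f2 → ∀ v, v ∈ f1 → v ∈ f2 → v = i0)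
    (e2 : Finset (Fin n)) (he2 : e2 ∈ E) (hi0e2 : i0 ∉ e2)
    (hsubN : e2 ⊆ (E.filter (fun e => i0 ∈ e)).biUnion (fun e => e.erase i0))
    (es : Finset (Fin n)) (hesE : es ∈ E) (hi0es : i0 ∈ es)
    (v' u : Fin n) (hv'e2 : v' ∈ e2) (hv'es : v' ∈ es) (hv'i0 : v' ≠ i0)
    (hues : u ∈ es) (hui0 : u ≠ i0) (hue2 : u ∉ e2) : False := by
  have hk0 : k ≠ 0 := by omega
  have hr1 : (1:ℝ) < r := lt_of_le_of_lt hd1 hrd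
  set Star := E.filter (fun e => i0 ∈ e) with hStar
  set N := Star.biUnion (fun e => e.erase i0) with hN
  have hi0N : i0 ∉ N := by
    intro hmem
    obtain ⟨e, _, he2'⟩ := Finset.mem_biUnion.1 hmem
    exact (Finset.mem_erase.1 he2').1 rfl
  have huv : u ≠ v' := fun h => hue2 (h ▸ hv'e2)
  have hesStar : es ∈ Star := Finset.mem_filter.2 ⟨hesE, hi0es⟩
  have hv'N : v' ∈ N := Finset.mem_biUnion.2 ⟨es, hesStar, Finset.mem_erase.2 ⟨hv'i0, hv'es⟩⟩
  have huN : u ∈ N := Finset.mem_biUnion.2 ⟨es, hesStar, Finset.mem_erase.2 ⟨hui0, hues⟩⟩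
  set x : Fin n → ℝ := fun j =>
    if j = i0 then -(r-1) else if j = v' then -1 else if j = u then -1
      else if j ∈ N then 1 else 0 with hx
  have hxi0 : x i0 = -(r-1) := by rw [hx]; simp
  have hxv' : x v' = -1 := by rw [hx]; simp [hv'i0]
  have hxu : x u = -1 := by rw [hx]; simp [hui0, huv]
  have hxother : ∀ j ∈ N, j ≠ v' → j ≠ u → x j = 1 := by
    intro j hj hjv hju
    have hji0 : j ≠ i0 := fun h => hi0N (h ▸ hj)
    rw [hx]; simp only
    rw [if_neg hji0, if_neg hjv, if_neg hju, if_pos hj]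
  have hx0 : ∀ j, j ∉ insert i0 N → x j = 0 := by
    intro j hj
    rw [Finset.mem_insert] at hj
    push_neg at hj
    have hjv : j ≠ v' := fun h => hj.2 (h ▸ hv'N)
    have hju : j ≠ u := fun h => hj.2 (h ▸ huN)
    rw [hx]; simp only
    rw [if_neg hj.1, if_neg hjv, if_neg hju, if_neg hj.2]
  have hxne : x ≠ 0 := by
    intro h
    have h2 := congrFun h i0
    rw [hxi0] at h2
    simp only [Pi.zero_apply] at h2
    linarith
  have hsqN : ∀ j ∈ N, x j ^ k = 1 := by
    intro j hj
    by_cases hjv : j = v'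
    · rw [hjv, hxv', show ((-1:ℝ)) = -(1:ℝ) from rfl, hkeven.neg_pow, one_pow]
    · by_cases hju : j = u
      · rw [hju, hxu, show ((-1:ℝ)) = -(1:ℝ) from rfl, hkeven.neg_pow, one_pow]
      · rw [hxother j hj hjv hju, one_pow]
  have herasesub : ∀ e ∈ Star, ∀ j ∈ e.erase i0, j ∈ N :=
    fun e he j hj => Finset.mem_biUnion.2 ⟨e, he, hj⟩
  have hsq : ∀ e ∈ Star, ∀ j ∈ e.erase i0, x j ^ k = 1 :=
    fun e he j hj => hsqN j (herasesub e he j hj)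
  have honly : ∀ e ∈ Star, e ≠ es → v' ∉ e ∧ u ∉ e := by
    intro e heS hene
    have heE := (Finset.mem_filter.1 heS).1
    have hi0e := (Finset.mem_filter.1 heS).2
    constructor
    · intro hv'e
      exact hv'i0 (hA e heE es hesE hene hi0e hi0es v' hv'e hv'es)
    · intro hue
      exact hui0 (hA e heE es hesE hene hi0e hi0es u hue hues)
  have hprod : ∀ e ∈ Star, ∏ j ∈ e.erase i0, x j = 1 := by
    intro e heS
    by_cases hees : e = es
    · subst hees
      have hv'mem : v' ∈ e.erase i0 := Finset.mem_erase.2 ⟨hv'i0, hv'es⟩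
      have humem : u ∈ (e.erase i0).erase v' :=
        Finset.mem_erase.2 ⟨huv, Finset.mem_erase.2 ⟨hui0, hues⟩⟩
      rw [← Finset.mul_prod_erase _ _ hv'mem, ← Finset.mul_prod_erase _ _ humem]
      have hrest : ∏ j ∈ ((e.erase i0).erase v').erase u, x j = 1 := by
        refine Finset.prod_eq_one fun j hj => ?_
        have hju : j ≠ u := (Finset.mem_erase.1 hj).1
        have hjv' : j ≠ v' := (Finset.mem_erase.1 (Finset.mem_of_mem_erase hj)).1
        have hjN : j ∈ N := herasesub e heS j
          (Finset.mem_of_mem_erase (Finset.mem_of_mem_erase hj))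
        exact hxother j hjN hjv' hju
      rw [hrest, hxv', hxu]
      ring
    · obtain ⟨hv'no, huno⟩ := honly e heS hees
      refine Finset.prod_eq_one fun j hj => ?_
      have hjv' : j ≠ v' := fun h => hv'no (h ▸ Finset.mem_of_mem_erase hj)
      have hju : j ≠ u := fun h => huno (h ▸ Finset.mem_of_mem_erase hj)
      exact hxother j (herasesub e heS j hj) hjv' hju
  have hstarval := starEdges_sum hk hkeven E hunif i0 hdeg0 r x hxi0 hsq hprod
  have he2sum : ∑ j ∈ e2, x j ^ k = (k:ℝ) := by
    rw [Finset.sum_congr rfl (fun j hj => hsqN j (hsubN hj)), Finset.sum_const,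
      nsmul_eq_mul, mul_one, hunif e2 he2]
  have he2prod : ∏ j ∈ e2, x j = -1 := by
    rw [← Finset.mul_prod_erase _ _ hv'e2]
    have hrest : ∏ j ∈ e2.erase v', x j = 1 := by
      refine Finset.prod_eq_one fun j hj => ?_
      have hjv' : j ≠ v' := (Finset.mem_erase.1 hj).1
      have hje2 : j ∈ e2 := Finset.mem_of_mem_erase hj
      have hju : j ≠ u := fun h => hue2 (h ▸ hje2)
      exact hxother j (hsubN hje2) hjv' hju
    rw [hrest, hxv']
    ring
  have he2Star : e2 ∉ Star := fun h => hi0e2 (Finset.mem_filter.1 h).2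
  have hFge : (d:ℝ) * ((r-1)^k + ((k:ℝ)-1) + k*(r-1)) + 2*(k:ℝ) ≤ Ffun k E x := by
    have hsub : insert e2 Star ⊆ E := Finset.insert_subset he2 (Finset.filter_subset _ _)
    have h1 := F_ge_subset (by omega : 0 < k) hkeven E (insert e2 Star) hunif hsub x
    rw [Finset.sum_insert he2Star, hstarval, he2sum, he2prod] at h1
    linarith
  have hgf : gfun k x = (r-1)^k + N.card := by
    rw [gfun_supp hk0 x (insert i0 N) hx0, Finset.sum_insert hi0N, hxi0, hkeven.neg_pow]
    congr 1
    rw [Finset.sum_congr rfl (fun j hj => hsqN j hj), Finset.sum_const,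
      nsmul_eq_mul, mul_one]
  have hνnat := N_card_le E hunif i0 hdeg0
  have hν : (N.card : ℝ) ≤ (d:ℝ) * ((k:ℝ)-1) := by
    have h' : (N.card : ℝ) ≤ ((d * (k-1) : ℕ) : ℝ) := by exact_mod_cast hνnat
    rw [Nat.cast_mul, Nat.cast_sub (by omega : 1 ≤ k), Nat.cast_one] at h'
    exact h'
  have hFle := FleR x hxne
  rw [hgf] at hFle
  have hkey := key_identity hk (d := d) hreq'
  have hrpos : (0:ℝ) < r := by linarith
  have h5 : r * ((r-1)^k + (N.card:ℝ)) ≤ r * ((r-1)^k + (d:ℝ)*((k:ℝ)-1)) :=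
    mul_le_mul_of_nonneg_left (by linarith) (by linarith)
  have hk4 : (4:ℝ) ≤ (k:ℝ) := by exact_mod_cast hk
  linarith

lemma caseB1 {k d : ℕ} (hk : 4 ≤ k) (hkeven : Even k) (hd : 0 < d)
    (E : Finset (Finset (Fin n))) (hunif : ∀ e ∈ E, e.card = k)
    {r : ℝ} (hrd : (d:ℝ) < r) (hd1 : (1:ℝ) ≤ (d:ℝ))
    (hreq' : (r-1)^(k-1) * (r - (d:ℝ)) = (d:ℝ))
    (FleR : ∀ x : Fin n → ℝ, x ≠ 0 → Ffun k E x ≤ r * gfun k x)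
    (i0 : Fin n) (hdeg0 : hdeg E i0 = d)
    (e2 : Finset (Fin n)) (he2 : e2 ∈ E) (hi0e2 : i0 ∉ e2)
    (v' : Fin n) (hv'e2 : v' ∈ e2)
    (hv'N : v' ∈ (E.filter (fun e => i0 ∈ e)).biUnion (fun e => e.erase i0))
    (w : Fin n) (hwe2 : w ∈ e2)
    (hwN : w ∉ (E.filter (fun e => i0 ∈ e)).biUnion (fun e => e.erase i0)) : False := by
  have hk0 : k ≠ 0 := by omega
  have hr1 : (1:ℝ) < r := lt_of_le_of_lt hd1 hrd
  set Star := E.filter (fun e => i0 ∈ e) with hStar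
  set N := Star.biUnion (fun e => e.erase i0) with hN
  have hi0N : i0 ∉ N := by
    intro hmem
    obtain ⟨e, _, he2'⟩ := Finset.mem_biUnion.1 hmem
    exact (Finset.mem_erase.1 he2').1 rfl
  set μ : ℕ := (e2 \ N).card with hμ
  have hwsd : w ∈ e2 \ N := Finset.mem_sdiff.2 ⟨hwe2, hwN⟩
  have hμ1 : 1 ≤ μ := Finset.card_pos.2 ⟨w, hwsd⟩
  have hμk : μ ≤ k - 1 := by
    have h1 : (e2 \ N).card + (e2 ∩ N).card = e2.card := Finset.card_sdiff_add_card_inter e2 N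
    have h2 : 1 ≤ (e2 ∩ N).card := Finset.card_pos.2 ⟨v', Finset.mem_inter.2 ⟨hv'e2, hv'N⟩⟩
    have h3 := hunif e2 he2
    omega
  have hμR1 : (1:ℝ) ≤ (μ:ℝ) := by exact_mod_cast hμ1
  have hkR : (0:ℝ) < (k:ℝ) := by exact_mod_cast (show 0 < k by omega)
  have hμpos : (0:ℝ) < (μ:ℝ) := by linarith
  have hrpos : (0:ℝ) < r := by linarith
  have hrμpos : (0:ℝ) < r * (μ:ℝ) := mul_pos hrpos hμpos
  have hden : (0:ℝ) < (k:ℝ) + r * μ := by linarith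
  obtain ⟨c, hc0, hc1, hcval⟩ : ∃ c : ℝ, 0 < c ∧ c < 1 ∧ c * ((k:ℝ) + r * μ) = k :=
    ⟨(k:ℝ) / ((k:ℝ) + r * μ), div_pos hkR hden, (div_lt_one hden).2 (by linarith),
      div_mul_cancel₀ _ (ne_of_gt hden)⟩
  have hrμc : r * μ * c < k := by nlinarith [hcval, mul_pos hkR hc0]
  have hwi0 : w ≠ i0 := fun h => hi0e2 (h ▸ hwe2)
  set x : Fin n → ℝ := fun j =>
    if j = i0 then -(r-1) else if j ∈ N then 1 else if j = w then -c
      else if j ∈ e2 then c else 0 with hx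
  have hxi0 : x i0 = -(r-1) := by rw [hx]; simp
  have hxN : ∀ j ∈ N, x j = 1 := by
    intro j hj
    have hji0 : j ≠ i0 := fun h => hi0N (h ▸ hj)
    rw [hx]; simp only
    rw [if_neg hji0, if_pos hj]
  have hxw : x w = -c := by
    rw [hx]; simp only
    rw [if_neg hwi0, if_neg hwN]
    simp
  have hxsd : ∀ j ∈ e2 \ N, j ≠ w → x j = c := by
    intro j hj hjw
    rw [Finset.mem_sdiff] at hj
    have hji0 : j ≠ i0 := fun h => hi0e2 (h ▸ hj.1)
    rw [hx]; simp only
    rw [if_neg hji0, if_neg hj.2, if_neg hjw, if_pos hj.1]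
  have hx0 : ∀ j, j ∉ insert i0 (N ∪ e2) → x j = 0 := by
    intro j hj
    rw [Finset.mem_insert, Finset.mem_union] at hj
    push_neg at hj
    have hjw : j ≠ w := fun h => hj.2.2 (h ▸ hwe2)
    rw [hx]; simp only
    rw [if_neg hj.1, if_neg hj.2.1, if_neg hjw, if_neg hj.2.2]
  have hxne : x ≠ 0 := by
    intro h
    have h2 := congrFun h i0
    rw [hxi0] at h2
    simp only [Pi.zero_apply] at h2
    linarith
  have herasesub : ∀ e ∈ Star, ∀ j ∈ e.erase i0, j ∈ N :=
    fun e he j hj => Finset.mem_biUnion.2 ⟨e, he, hj⟩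
  have hsq : ∀ e ∈ Star, ∀ j ∈ e.erase i0, x j ^ k = 1 := by
    intro e he j hj
    rw [hxN j (herasesub e he j hj), one_pow]
  have hprod : ∀ e ∈ Star, ∏ j ∈ e.erase i0, x j = 1 := by
    intro e he
    exact Finset.prod_eq_one (fun j hj => hxN j (herasesub e he j hj))
  have hstarval := starEdges_sum hk hkeven E hunif i0 hdeg0 r x hxi0 hsq hprod
  -- e2 sums
  have hsd_pow : ∀ j ∈ e2 \ N, x j ^ k = c ^ k := by
    intro j hj
    by_cases hjw : j = w
    · rw [hjw, hxw, show (-c : ℝ) = -(c) from rfl, hkeven.neg_pow]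
    · rw [hxsd j hj hjw]
  have he2sum : ∑ j ∈ e2, x j ^ k = ((k:ℝ) - μ) + μ * c ^ k := by
    rw [← Finset.sum_inter_add_sum_sdiff e2 N (fun j => x j ^ k)]
    congr 1
    · rw [Finset.sum_congr rfl (fun j hj => by
        rw [hxN j (Finset.mem_inter.1 hj).2, one_pow]), Finset.sum_const,
        nsmul_eq_mul, mul_one]
      have h1 : (e2 \ N).card + (e2 ∩ N).card = e2.card := Finset.card_sdiff_add_card_inter e2 N
      have h3 := hunif e2 he2
      have h4 : (e2 ∩ N).card = k - μ := by omega
      rw [h4, Nat.cast_sub (by omega : μ ≤ k)]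
    · rw [Finset.sum_congr rfl hsd_pow, Finset.sum_const, nsmul_eq_mul, ← hμ]
  have he2prod : ∏ j ∈ e2, x j = -(c ^ μ) := by
    have hsplit : (∏ j ∈ e2 \ (e2 ∩ N), x j) * ∏ j ∈ e2 ∩ N, x j = ∏ j ∈ e2, x j :=
      Finset.prod_sdiff (Finset.inter_subset_left)
    rw [Finset.sdiff_inter_self_left] at hsplit
    have hint : ∏ j ∈ e2 ∩ N, x j = 1 :=
      Finset.prod_eq_one (fun j hj => hxN j (Finset.mem_inter.1 hj).2)
    have hdiff : ∏ j ∈ e2 \ N, x j = -(c ^ μ) := by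
      rw [← Finset.mul_prod_erase _ _ hwsd, hxw]
      have hrest : ∏ j ∈ (e2 \ N).erase w, x j = c ^ (μ - 1) := by
        rw [Finset.prod_congr rfl (fun j hj => hxsd j (Finset.mem_of_mem_erase hj)
          (Finset.mem_erase.1 hj).1), Finset.prod_const, Finset.card_erase_of_mem hwsd]
      rw [hrest]
      have : c * c ^ (μ - 1) = c ^ μ := by
        rw [← pow_succ']
        congr 1
        omega
      rw [← this]
      ring
    rw [← hsplit, hint, mul_one, hdiff]
  have he2Star : e2 ∉ Star := fun h => hi0e2 (Finset.mem_filter.1 h).2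
  have hFge : (d:ℝ) * ((r-1)^k + ((k:ℝ)-1) + k*(r-1))
      + (((k:ℝ) - μ) + μ * c ^ k + k * c ^ μ) ≤ Ffun k E x := by
    have hsub : insert e2 Star ⊆ E := Finset.insert_subset he2 (Finset.filter_subset _ _)
    have h1 := F_ge_subset (by omega : 0 < k) hkeven E (insert e2 Star) hunif hsub x
    rw [Finset.sum_insert he2Star, hstarval, he2sum, he2prod] at h1
    linarith
  have hgf : gfun k x = (r-1)^k + N.card + μ * c ^ k := by
    rw [gfun_supp hk0 x (insert i0 (N ∪ e2)) hx0, Finset.sum_insert (by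
      rw [Finset.mem_union]
      push_neg
      exact ⟨hi0N, hi0e2⟩), hxi0, hkeven.neg_pow]
    have hsplit : N ∪ e2 = N ∪ (e2 \ N) := by rw [Finset.union_sdiff_self_eq_union]
    rw [hsplit, Finset.sum_union (Finset.disjoint_sdiff)]
    rw [Finset.sum_congr rfl (fun j hj => by rw [hxN j hj, one_pow]), Finset.sum_const,
      nsmul_eq_mul, mul_one, Finset.sum_congr rfl hsd_pow, Finset.sum_const,
      nsmul_eq_mul, ← hμ]
    ring
  have hνnat := N_card_le E hunif i0 hdeg0
  have hν : (N.card : ℝ) ≤ (d:ℝ) * ((k:ℝ)-1) := by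
    have h' : (N.card : ℝ) ≤ ((d * (k-1) : ℕ) : ℝ) := by exact_mod_cast hνnat
    rw [Nat.cast_mul, Nat.cast_sub (by omega : 1 ≤ k), Nat.cast_one] at h'
    exact h'
  have hFle := FleR x hxne
  rw [hgf] at hFle
  have hkey := key_identity hk (d := d) hreq'
  have hrpos : (0:ℝ) < r := by linarith
  -- consequence: (k - μ) + μ c^k + k c^μ ≤ r μ c^k
  have hrν : r * (N.card:ℝ) ≤ r * ((d:ℝ)*((k:ℝ)-1)) :=
    mul_le_mul_of_nonneg_left hν (by linarith)
  have hmain : ((k:ℝ) - μ) + μ * c ^ k + k * c ^ μ ≤ r * (μ * c ^ k) := by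
    have hexp1 : r * ((r-1)^k + (N.card:ℝ) + μ * c ^ k)
        = r * (r-1)^k + r * (N.card:ℝ) + r * (μ * c ^ k) := by ring
    have hexp2 : r * ((r-1)^k + (d:ℝ)*((k:ℝ)-1))
        = r * (r-1)^k + r * ((d:ℝ)*((k:ℝ)-1)) := by ring
    linarith [hFge, hFle, hkey, hrν, hexp1, hexp2]
  -- contradiction
  have hμks : (μ:ℝ) + 1 ≤ (k:ℝ) := by
    have : μ + 1 ≤ k := by omega
    exact_mod_cast this
  have hckμ : c ^ k ≤ c * c ^ μ := by
    calc c ^ k ≤ c ^ (μ + 1) := pow_le_pow_of_le_one (le_of_lt hc0) (le_of_lt hc1) (by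
      have : μ + 1 ≤ k := by omega
      exact this)
      _ = c * c ^ μ := by rw [pow_succ']
  have hcμpos : 0 < c ^ μ := pow_pos hc0 μ
  have h7 : r * (μ * c ^ k) ≤ (r * μ * c) * c ^ μ := by
    have h8 : r * μ * c ^ k ≤ r * μ * (c * c ^ μ) :=
      mul_le_mul_of_nonneg_left hckμ (le_of_lt hrμpos)
    calc r * (μ * c ^ k) = r * μ * c ^ k := by ring
      _ ≤ r * μ * (c * c ^ μ) := h8
      _ = (r * μ * c) * c ^ μ := by ring
  have h9 : (r * μ * c) * c ^ μ < k * c ^ μ := by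
    exact mul_lt_mul_of_pos_right hrμc hcμpos
  have hkμpos : (0:ℝ) ≤ (k:ℝ) - μ := by linarith
  have hcκpos : (0:ℝ) ≤ (μ:ℝ) * c ^ k :=
    mul_nonneg (le_of_lt hμpos) (le_of_lt (pow_pos hc0 k))
  linarith

end AuxMachinery

/-- For `k ≥ 4` even and a `k`-uniform connected hypergraph with maximum
degree `d > 0` and Laplacian tensor `L`, `λ(L)` equals the unique real root of
`(1-λ)^(k-1) * (λ-d) + d = 0` in `(d, d+1)` if and only if `G` is a hyperstar. -/
theorem largest_lap_eig_eq_iff_hyperstar {n k d : ℕ} (hk : 4 ≤ k) (hkeven : Even k)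
    (hkn : k ≤ n) (E : Finset (Finset (Fin n))) (hunif : ∀ e ∈ E, e.card = k)
    (hconn : IsConnectedH E)
    (hdle : ∀ i, hdeg E i ≤ d) (hdmax : ∃ i, hdeg E i = d) (hd : 0 < d)
    (lam : ℝ) (hlam : IsLargestLapEig k E lam)
    (r : ℝ) (hr : r ∈ Set.Ioo (d : ℝ) ((d : ℝ) + 1))
    (hreq : (1 - r) ^ (k - 1) * (r - (d : ℝ)) + (d : ℝ) = 0) :
    lam = r ↔ IsHyperstar k d E := by
  have hn : 0 < n := by omega
  have hd1 : (1:ℝ) ≤ (d:ℝ) := by exact_mod_cast hd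
  have hrd : (d:ℝ) < r := hr.1
  have hodd : Odd (k - 1) := by obtain ⟨m, hm⟩ := hkeven; exact ⟨m - 1, by omega⟩
  have hreq' : (r - 1) ^ (k - 1) * (r - (d:ℝ)) = (d:ℝ) := by
    have hneg1r : (1 - r) ^ (k - 1) = -((r - 1) ^ (k - 1)) := by
      rw [show (1 - r) = -(r - 1) by ring, hodd.neg_pow]
    rw [hneg1r] at hreq
    linarith
  constructor
  · intro hlameq
    have FleR : ∀ x : Fin n → ℝ, x ≠ 0 → Ffun k E x ≤ r * gfun k x := by
      intro x hx
      have h := Ffun_le_lam hn (by omega) hkeven E hunif lam hlam x hx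
      rwa [hlameq] at h
    obtain ⟨i0, hdeg0⟩ := hdmax
    by_cases hACase : ∃ f1 ∈ E, ∃ f2 ∈ E,
        f1 ≠ f2 ∧ i0 ∈ f1 ∧ i0 ∈ f2 ∧ ∃ v, v ∈ f1 ∧ v ∈ f2 ∧ v ≠ i0
    · exfalso
      obtain ⟨f1, hf1, f2, hf2, hne, hi01, hi02, v, hv1, hv2, hvi0⟩ := hACase
      exact caseA hk hkeven hd E hunif hrd hd1 hreq' FleR i0 hdeg0 f1 f2 hf1 hf2 hne
        hi01 hi02 v hv1 hv2 hvi0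
    · push_neg at hACase
      by_cases hall : ∀ e ∈ E, i0 ∈ e
      · -- G is a hyperstar with heart i0
        have hEcard : E.card = d := by
          rw [← hdeg0, hdeg, Finset.filter_true_of_mem hall]
        have hedge : ∀ i : Fin d,
            ((E.equivFin.symm (Fin.cast hEcard.symm i)) : Finset (Fin n)) ∈ E :=
          fun i => (E.equivFin.symm (Fin.cast hEcard.symm i)).2
        set P : Fin d → Finset (Fin n) :=
          fun i => ((E.equivFin.symm (Fin.cast hEcard.symm i)) : Finset (Fin n)).erase i0
          with hP
        have hedgeinj : Function.Injective
            (fun i : Fin d => ((E.equivFin.symm (Fin.cast hEcard.symm i)) : Finset (Fin n))) := by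
          intro i j hij
          have h2 : E.equivFin.symm (Fin.cast hEcard.symm i)
              = E.equivFin.symm (Fin.cast hEcard.symm j) := Subtype.ext hij
          have h3 := E.equivFin.symm.injective h2
          have h4 := congrArg Fin.val h3
          exact Fin.ext h4
        have hcastid : ∀ (e : Finset (Fin n)) (he : e ∈ E),
            ((E.equivFin.symm (Fin.cast hEcard.symm
              (Fin.cast hEcard (E.equivFin ⟨e, he⟩)))) : Finset (Fin n)) = e := by
          intro e he
          have h1 : Fin.cast hEcard.symm (Fin.cast hEcard (E.equivFin ⟨e, he⟩))
              = E.equivFin ⟨e, he⟩ := rfl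
          rw [h1, Equiv.symm_apply_apply]
        refine ⟨i0, P, fun i => Finset.notMem_erase _ _, ?_, ?_, ?_, ?_⟩
        · intro i
          rw [hP]
          simp only
          rw [Finset.card_erase_of_mem (hall _ (hedge i)), hunif _ (hedge i)]
        · intro i j hij
          rw [Finset.disjoint_left]
          intro v hvi hvj
          rw [hP] at hvi hvj
          simp only at hvi hvj
          have hvi0' : v ≠ i0 := (Finset.mem_erase.1 hvi).1
          have hedne : ((E.equivFin.symm (Fin.cast hEcard.symm i)) : Finset (Fin n))
              ≠ ((E.equivFin.symm (Fin.cast hEcard.symm j)) : Finset (Fin n)) :=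
            fun h => hij (hedgeinj h)
          exact hvi0' (hACase _ (hedge i) _ (hedge j) hedne (hall _ (hedge i))
            (hall _ (hedge j)) v (Finset.mem_of_mem_erase hvi) (Finset.mem_of_mem_erase hvj))
        · intro v hv
          obtain ⟨c, e, he, hve, _⟩ := transGen_first (hconn v i0 hv)
          refine ⟨Fin.cast hEcard (E.equivFin ⟨e, he⟩), ?_⟩
          rw [hP]
          simp only
          rw [hcastid e he]
          exact Finset.mem_erase.2 ⟨hv, hve⟩
        · ext e
          simp only [Finset.mem_image, Finset.mem_univ, true_and]
          constructor
          · intro he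
            refine ⟨Fin.cast hEcard (E.equivFin ⟨e, he⟩), ?_⟩
            rw [hP]
            simp only
            rw [hcastid e he, Finset.insert_erase (hall e he)]
          · rintro ⟨i, rfl⟩
            rw [hP]
            simp only
            rw [Finset.insert_erase (hall _ (hedge i))]
            exact hedge i
      · exfalso
        push_neg at hall
        obtain ⟨e0, he0, hi0e0⟩ := hall
        have he0ne : e0.Nonempty := Finset.card_pos.1 (by rw [hunif e0 he0]; omega)
        obtain ⟨e2, he2, hi0e2, hmeet⟩ := reach_lemma E hconn i0 e0 he0 hi0e0 he0ne
        by_cases hsubN : e2 ⊆ (E.filter (fun e => i0 ∈ e)).biUnion (fun e => e.erase i0)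
        · have he2ne : e2.Nonempty := Finset.card_pos.1 (by rw [hunif e2 he2]; omega)
          obtain ⟨v0, hv0⟩ := he2ne
          have hv0N := hsubN hv0
          obtain ⟨ei, heiStar, hv0ei⟩ := Finset.mem_biUnion.1 hv0N
          have heiE : ei ∈ E := (Finset.mem_filter.1 heiStar).1
          have hi0ei : i0 ∈ ei := (Finset.mem_filter.1 heiStar).2
          by_cases hfull : ei.erase i0 ⊆ e2
          · have hlt : (ei.erase i0).card < e2.card := by
              rw [Finset.card_erase_of_mem hi0ei, hunif ei heiE, hunif e2 he2]
              omega
            have hssub : ei.erase i0 ⊂ e2 := Finset.ssubset_iff_subset_ne.2 ⟨hfull, by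
              intro h
              rw [h] at hlt
              exact lt_irrefl _ hlt⟩
            obtain ⟨z, hze2, hznot⟩ := Finset.exists_of_ssubset hssub
            have hzN := hsubN hze2
            obtain ⟨ej, hejStar, hzej⟩ := Finset.mem_biUnion.1 hzN
            have hejE : ej ∈ E := (Finset.mem_filter.1 hejStar).1
            have hi0ej : i0 ∈ ej := (Finset.mem_filter.1 hejStar).2
            have hzi0 : z ≠ i0 := fun h => hi0e2 (h ▸ hze2)
            have hejnei : ej ≠ ei := fun h => hznot (h ▸ hzej)
            by_cases hfull2 : ej.erase i0 ⊆ e2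
            · have hunion : (ei.erase i0) ∪ (ej.erase i0) ⊆ e2 :=
                Finset.union_subset hfull hfull2
              have h1 := Finset.card_inter_add_card_union (ei.erase i0) (ej.erase i0)
              have h2 : ((ei.erase i0) ∪ (ej.erase i0)).card ≤ k :=
                le_trans (Finset.card_le_card hunion) (le_of_eq (hunif e2 he2))
              have hcA : (ei.erase i0).card = k - 1 := by
                rw [Finset.card_erase_of_mem hi0ei, hunif ei heiE]
              have hcB : (ej.erase i0).card = k - 1 := by
                rw [Finset.card_erase_of_mem hi0ej, hunif ej hejE]
              have hpos : 0 < ((ei.erase i0) ∩ (ej.erase i0)).card := by omega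
              obtain ⟨v, hv⟩ := Finset.card_pos.1 hpos
              rw [Finset.mem_inter] at hv
              have hvi0' : v ≠ i0 := (Finset.mem_erase.1 hv.1).1
              exact hvi0' (hACase ei heiE ej hejE (fun h => hejnei h.symm) hi0ei hi0ej v
                (Finset.mem_of_mem_erase hv.1) (Finset.mem_of_mem_erase hv.2))
            · obtain ⟨u, huej, hue2⟩ := Finset.not_subset.1 hfull2
              exact caseB2 hk hkeven hd E hunif hrd hd1 hreq' FleR i0 hdeg0 hACase
                e2 he2 hi0e2 hsubN ej hejE hi0ej z u hze2 (Finset.mem_of_mem_erase hzej)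
                hzi0 (Finset.mem_of_mem_erase huej) (Finset.mem_erase.1 huej).1 hue2
          · obtain ⟨u, huei, hue2⟩ := Finset.not_subset.1 hfull
            have hv0i0 : v0 ≠ i0 := (Finset.mem_erase.1 hv0ei).1
            exact caseB2 hk hkeven hd E hunif hrd hd1 hreq' FleR i0 hdeg0 hACase
              e2 he2 hi0e2 hsubN ei heiE hi0ei v0 u hv0 (Finset.mem_of_mem_erase hv0ei)
              hv0i0 (Finset.mem_of_mem_erase huei) (Finset.mem_erase.1 huei).1 hue2
        · obtain ⟨w, hwe2, hwN⟩ := Finset.not_subset.1 hsubN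
          obtain ⟨v', hv'⟩ := hmeet
          rw [Finset.mem_inter] at hv'
          exact caseB1 hk hkeven hd E hunif hrd hd1 hreq' FleR i0 hdeg0 e2 he2 hi0e2
            v' hv'.1 hv'.2 w hwe2 hwN
  · intro hstar
    exact hyperstar_lam hk hkeven hd E hunif hstar r lam hrd hreq hlam
end

section
/- Let G=(V,E) be a k-uniform connected hypergraph with maximum degree d>0 and signless Laplacian tensor Q. Let α* be the largest real root of the equation α^k+(1−d)α^{k−1}−d=0; then α* lies in the interval (d−1,d], and λ(Q) ≥ d + d·(1/α*)^{k−1}, with equality holding if and only if G is a hyperstar. -/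
open Finset

variable {α : Type*} [DecidableEq α]

section Machinery

variable {n : ℕ}

/-- The quadratic-form style polynomial `F(x) = ∑ d_i x_i^k + k ∑_e ∏_{j∈e} x_j`. -/
def Fq (k : ℕ) (E : Finset (Finset (Fin n))) (x : Fin n → ℝ) : ℝ :=
  ∑ i, (hdeg E i : ℝ) * x i ^ k + k * ∑ e ∈ E, ∏ j ∈ e, x j

lemma continuous_Fq (k : ℕ) (E : Finset (Finset (Fin n))) : Continuous (Fq k E) := by
  unfold Fq
  exact (continuous_finset_sum _ fun i _ =>
      continuous_const.mul ((continuous_apply i).pow k)).add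
    (continuous_const.mul (continuous_finset_sum _ fun e _ =>
      continuous_finset_prod _ fun j _ => continuous_apply j))

lemma sum_pow_update (x : Fin n → ℝ) (i : Fin n) (s : ℝ) (k : ℕ) :
    ∑ j, (Function.update x i s j) ^ k = (∑ j, x j ^ k) + (s ^ k - x i ^ k) := by
  rw [← Finset.sum_erase_add _ _ (Finset.mem_univ i),
      ← Finset.sum_erase_add _ (fun j => x j ^ k) (Finset.mem_univ i)]
  rw [Function.update_self]
  have : ∑ j ∈ Finset.univ.erase i, (Function.update x i s j) ^ k
      = ∑ j ∈ Finset.univ.erase i, x j ^ k := by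
    refine Finset.sum_congr rfl fun j hj => ?_
    rw [Function.update_of_ne (Finset.ne_of_mem_erase hj)]
  rw [this]; ring

lemma sum_prod_update (E : Finset (Finset (Fin n))) (x : Fin n → ℝ) (i : Fin n) (s : ℝ) :
    ∑ e ∈ E, ∏ j ∈ e, Function.update x i s j
      = (∑ e ∈ E, ∏ j ∈ e, x j) + (s - x i) * adjAct E x i := by
  have key : ∀ y : Fin n → ℝ, ∑ e ∈ E, ∏ j ∈ e, y j
      = (∑ e ∈ E.filter (fun e => i ∈ e), ∏ j ∈ e, y j)
        + ∑ e ∈ E.filter (fun e => ¬ i ∈ e), ∏ j ∈ e, y j := by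
    intro y; rw [Finset.sum_filter_add_sum_filter_not]
  rw [key (Function.update x i s), key x]
  have h1 : ∑ e ∈ E.filter (fun e => ¬ i ∈ e), ∏ j ∈ e, Function.update x i s j
      = ∑ e ∈ E.filter (fun e => ¬ i ∈ e), ∏ j ∈ e, x j := by
    refine Finset.sum_congr rfl fun e he => Finset.prod_congr rfl fun j hj => ?_
    have : i ∉ e := (Finset.mem_filter.1 he).2
    have hji : j ≠ i := fun h => this (h ▸ hj)
    exact Function.update_of_ne hji _ _
  have h2 : ∀ (y : Fin n → ℝ), ∑ e ∈ E.filter (fun e => i ∈ e), ∏ j ∈ e, y j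
      = y i * ∑ e ∈ E.filter (fun e => i ∈ e), ∏ j ∈ e.erase i, y j := by
    intro y
    rw [Finset.mul_sum]
    refine Finset.sum_congr rfl fun e he => ?_
    rw [← Finset.mul_prod_erase e y (Finset.mem_filter.1 he).2]
  have h3 : ∀ e ∈ E.filter (fun e => i ∈ e),
      ∏ j ∈ e.erase i, Function.update x i s j = ∏ j ∈ e.erase i, x j := by
    intro e he
    refine Finset.prod_congr rfl fun j hj => ?_
    exact Function.update_of_ne (Finset.ne_of_mem_erase hj) _ _
  rw [h1, h2, h2, Function.update_self, Finset.sum_congr rfl h3]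
  unfold adjAct
  ring

lemma Fq_update (k : ℕ) (E : Finset (Finset (Fin n))) (x : Fin n → ℝ) (i : Fin n) (s : ℝ) :
    Fq k E (Function.update x i s)
      = Fq k E x + (hdeg E i : ℝ) * (s ^ k - x i ^ k) + k * (s - x i) * adjAct E x i := by
  unfold Fq
  rw [sum_prod_update]
  have : ∑ j, (hdeg E j : ℝ) * (Function.update x i s j) ^ k
      = (∑ j, (hdeg E j : ℝ) * x j ^ k) + (hdeg E i : ℝ) * (s ^ k - x i ^ k) := by
    rw [← Finset.sum_erase_add _ _ (Finset.mem_univ i),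
        ← Finset.sum_erase_add _ (fun j => (hdeg E j : ℝ) * x j ^ k) (Finset.mem_univ i)]
    rw [Function.update_self]
    have : ∑ j ∈ Finset.univ.erase i, (hdeg E j : ℝ) * (Function.update x i s j) ^ k
        = ∑ j ∈ Finset.univ.erase i, (hdeg E j : ℝ) * x j ^ k := by
      refine Finset.sum_congr rfl fun j hj => ?_
      rw [Function.update_of_ne (Finset.ne_of_mem_erase hj)]
    rw [this]; ring
  rw [this]; ring

lemma Fq_smul {k : ℕ} {E : Finset (Finset (Fin n))} (hunif : ∀ e ∈ E, e.card = k)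
    (c : ℝ) (x : Fin n → ℝ) : Fq k E (fun j => c * x j) = c ^ k * Fq k E x := by
  unfold Fq
  rw [mul_add, Finset.mul_sum, Finset.mul_sum]
  congr 1
  · refine Finset.sum_congr rfl fun j _ => by ring
  · rw [Finset.mul_sum]
    simp only [← mul_assoc, mul_comm (c ^ k) (k : ℝ), mul_assoc, Finset.mul_sum]
    refine Finset.sum_congr rfl fun e he => ?_
    rw [Finset.prod_mul_distrib, Finset.prod_const, hunif e he]
    ring

end Machinery

lemma f_pos_of_gt {k d : ℕ} (hk : 3 ≤ k) (hd : 1 ≤ d) {b : ℝ} (hb : (d:ℝ) < b) :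
    0 < b ^ k + (1 - (d : ℝ)) * b ^ (k - 1) - (d : ℝ) := by
  have hd1 : (1:ℝ) ≤ (d:ℝ) := by exact_mod_cast hd
  have hb1 : (1:ℝ) < b := lt_of_le_of_lt hd1 hb
  have hbk : b ^ 1 ≤ b ^ (k-1) := pow_le_pow_right₀ hb1.le (by omega)
  have hkk : b ^ k = b ^ (k-1) * b := by
    rw [← pow_succ]; congr 1; omega
  rw [hkk]
  simp only [pow_one] at hbk
  nlinarith [hbk, hb, hd1]

lemma f_nonpos_le_root {k d : ℕ} (hk : 3 ≤ k) (hd : 1 ≤ d) {b : ℝ}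
    (hb : b ^ k + (1 - (d : ℝ)) * b ^ (k - 1) - (d : ℝ) ≤ 0) :
    ∃ r : ℝ, r ^ k + (1 - (d : ℝ)) * r ^ (k - 1) - (d : ℝ) = 0 ∧ b ≤ r := by
  set f : ℝ → ℝ := fun t => t ^ k + (1 - (d : ℝ)) * t ^ (k - 1) - (d : ℝ) with hf
  have hcont : Continuous f := by fun_prop
  have hble : b ≤ (d:ℝ) + 1 := by
    by_contra h
    push_neg at h
    have := f_pos_of_gt hk hd (b := b) (by linarith [(by exact_mod_cast hd : (1:ℝ) ≤ d)])
    linarith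
  have hpos : 0 < f ((d:ℝ)+1) := f_pos_of_gt hk hd (by linarith)
  have := intermediate_value_Icc hble hcont.continuousOn
  have h0 : (0:ℝ) ∈ Set.Icc (f b) (f ((d:ℝ)+1)) := ⟨hb, hpos.le⟩
  obtain ⟨r, hr, hr0⟩ := this h0
  exact ⟨r, hr0, hr.1⟩

lemma root_facts {k d : ℕ} (hk : 3 ≤ k) (hd : 1 ≤ d) {a : ℝ}
    (ha : a ^ k + (1 - (d : ℝ)) * a ^ (k - 1) - (d : ℝ) = 0)
    (hamax : ∀ b : ℝ, b ^ k + (1 - (d : ℝ)) * b ^ (k - 1) - (d : ℝ) = 0 → b ≤ a) :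
    a ∈ Set.Ioc ((d : ℝ) - 1) (d : ℝ) ∧ 0 < a ∧
      (d : ℝ) + (d : ℝ) * (1 / a) ^ (k - 1) = a + 1 := by
  have hd1 : (1:ℝ) ≤ (d:ℝ) := by exact_mod_cast hd
  have hale : a ≤ (d:ℝ) := by
    by_contra h
    push_neg at h
    have := f_pos_of_gt hk hd h
    linarith
  have hfd1 : ((d:ℝ)-1) ^ k + (1 - (d : ℝ)) * ((d:ℝ)-1) ^ (k - 1) - (d : ℝ) ≤ 0 := by
    have : ((d:ℝ)-1) ^ k = ((d:ℝ)-1) ^ (k-1) * ((d:ℝ)-1) := by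
      rw [← pow_succ]; congr 1; omega
    rw [this]; nlinarith
  obtain ⟨r, hr0, hbr⟩ := f_nonpos_le_root hk hd hfd1
  have hra : r ≤ a := hamax r hr0
  have hane : a ≠ (d:ℝ) - 1 := by
    intro h
    rw [h] at ha
    have : ((d:ℝ)-1) ^ k = ((d:ℝ)-1) ^ (k-1) * ((d:ℝ)-1) := by
      rw [← pow_succ]; congr 1; omega
    rw [this] at ha
    nlinarith
  have hagt : (d:ℝ) - 1 < a := lt_of_le_of_ne (le_trans hbr hra) (Ne.symm hane)
  have hapos : 0 < a := by linarith
  refine ⟨⟨hagt, hale⟩, hapos, ?_⟩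
  have hpk : a ^ (k-1) ≠ 0 := pow_ne_zero _ hapos.ne'
  have hak : a ^ k = a ^ (k-1) * a := by rw [← pow_succ]; congr 1; omega
  rw [hak] at ha
  rw [one_div_pow, mul_one_div, eq_comm, ← sub_eq_iff_eq_add', eq_div_iff hpk]
  linear_combination ha
section Eig

variable {n : ℕ}

lemma exists_good_eig {k : ℕ} (hk : 3 ≤ k) {E : Finset (Finset (Fin n))}
    (hn : 0 < n) (hunif : ∀ e ∈ E, e.card = k) :
    ∃ (lams : ℝ) (y : Fin n → ℝ), y ≠ 0 ∧
      (∀ i, signAct k E y i = lams * y i ^ (k - 1)) ∧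
      (∀ z : Fin n → ℝ, (∀ i, 0 ≤ z i) → Fq k E z ≤ lams * ∑ i, z i ^ k) := by
  have hk0 : k ≠ 0 := by omega
  have hk0' : ((k:ℝ)) ≠ 0 := Nat.cast_ne_zero.2 hk0
  have hkpos : (0:ℝ) < k := by positivity
  set K : Set (Fin n → ℝ) := {x | (∀ i, 0 ≤ x i) ∧ ∑ i, x i ^ k = 1} with hK
  have hsumcont : Continuous (fun x : Fin n → ℝ => ∑ i, x i ^ k) :=
    continuous_finset_sum _ fun i _ => (continuous_apply i).pow k
  have hclosed : IsClosed K := by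
    have : K = (⋂ i, {x : Fin n → ℝ | 0 ≤ x i}) ∩ {x | ∑ i, x i ^ k = 1} := by
      ext x; simp [hK, Set.mem_iInter]
    rw [this]
    exact ((isClosed_iInter fun i =>
      isClosed_le continuous_const (continuous_apply i))).inter
      (isClosed_eq hsumcont continuous_const)
  have hsub : K ⊆ Set.Icc (0 : Fin n → ℝ) 1 := by
    intro x hx
    constructor
    · intro i; exact hx.1 i
    · intro i
      have h1 : x i ^ k ≤ 1 := by
        rw [← hx.2]
        exact Finset.single_le_sum (fun j _ => pow_nonneg (hx.1 j) k) (Finset.mem_univ i)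
      have := pow_le_one_iff_of_nonneg (hx.1 i) hk0
      exact this.1 h1
  have hcomp : IsCompact K := isCompact_Icc.of_isClosed_subset hclosed hsub
  have hne : K.Nonempty := by
    refine ⟨Function.update (0 : Fin n → ℝ) ⟨0, hn⟩ 1, ?_, ?_⟩
    · intro i
      by_cases hi : i = ⟨0, hn⟩
      · subst hi; rw [Function.update_self]; norm_num
      · rw [Function.update_of_ne hi]; simp
    · rw [sum_pow_update]
      simp [zero_pow hk0]
  obtain ⟨y, hyK, hymax⟩ := hcomp.exists_isMaxOn hne (continuous_Fq k E).continuousOn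
  have hy0 : ∀ i, 0 ≤ y i := hyK.1
  have hy1 : ∑ i, y i ^ k = 1 := hyK.2
  set lams : ℝ := Fq k E y with hlams
  have master : ∀ z : Fin n → ℝ, (∀ i, 0 ≤ z i) → Fq k E z ≤ lams * ∑ i, z i ^ k := by
    intro z hz
    by_cases hzs : ∑ i, z i ^ k = 0
    · have hz0 : ∀ i, z i = 0 := by
        intro i
        have hle : z i ^ k ≤ ∑ j, z j ^ k :=
          Finset.single_le_sum (fun j _ => pow_nonneg (hz j) k) (Finset.mem_univ i)
        have h0 : z i ^ k = 0 := le_antisymm (by rw [hzs] at hle; exact hle) (pow_nonneg (hz i) k)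
        exact pow_eq_zero_iff hk0 |>.1 h0
      have hFz : Fq k E z = 0 := by
        unfold Fq
        have h1 : ∀ i ∈ Finset.univ, (hdeg E i : ℝ) * z i ^ k = 0 := by
          intro i _; rw [hz0 i, zero_pow hk0, mul_zero]
        have h2 : ∀ e ∈ E, ∏ j ∈ e, z j = 0 := by
          intro e he
          have hcard : e.card = k := hunif e he
          have hene : e.Nonempty := Finset.card_pos.1 (by omega)
          obtain ⟨j, hj⟩ := hene
          exact Finset.prod_eq_zero hj (hz0 j)
        rw [Finset.sum_eq_zero h1, Finset.sum_eq_zero h2]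
        ring
      rw [hFz, hzs, mul_zero]
    · have hzpos : 0 < ∑ i, z i ^ k :=
        lt_of_le_of_ne (Finset.sum_nonneg fun i _ => pow_nonneg (hz i) k) (Ne.symm hzs)
      set s : ℝ := ∑ i, z i ^ k with hs
      have hsk : (s ^ ((1:ℝ)/k)) ^ k = s := by
        rw [← Real.rpow_natCast (s ^ ((1:ℝ)/k)) k, ← Real.rpow_mul hzpos.le,
          one_div, inv_mul_cancel₀ hk0', Real.rpow_one]
      set c : ℝ := (s ^ ((1:ℝ)/k))⁻¹ with hc
      have hcpos : 0 < c := inv_pos.2 (Real.rpow_pos_of_pos hzpos _)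
      have hck : c ^ k = s⁻¹ := by rw [hc, inv_pow, hsk]
      have hmem : (fun j => c * z j) ∈ K := by
        constructor
        · intro i; exact mul_nonneg hcpos.le (hz i)
        · have : ∑ i, (c * z i) ^ k = c ^ k * ∑ i, z i ^ k := by
            rw [Finset.mul_sum]
            exact Finset.sum_congr rfl fun i _ => by rw [mul_pow]
          rw [this, hck, ← hs, inv_mul_cancel₀ hzs]
      have hle := isMaxOn_iff.1 hymax _ hmem
      rw [Fq_smul hunif] at hle
      rw [hck] at hle
      have := mul_le_mul_of_nonneg_left hle hzpos.le
      rw [← mul_assoc, mul_inv_cancel₀ hzs, one_mul] at this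
      linarith [this]
  have hyne : y ≠ 0 := by
    intro h
    rw [h] at hy1
    simp [zero_pow hk0] at hy1
  refine ⟨lams, y, hyne, ?_, master⟩
  intro i
  set B : ℝ := adjAct E y i with hB
  set di : ℝ := (hdeg E i : ℝ) with hdi
  have key : ∀ t : ℝ, -(y i) ≤ t →
      0 ≤ (lams - di) * ((y i + t) ^ k - y i ^ k) - k * B * t := by
    intro t ht
    have hznn : ∀ j, 0 ≤ Function.update y i (y i + t) j := by
      intro j
      by_cases hj : j = i
      · subst hj; rw [Function.update_self]; linarith
      · rw [Function.update_of_ne hj]; exact hy0 j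
    have hm := master _ hznn
    rw [Fq_update, sum_pow_update, hy1] at hm
    rw [← hlams, ← hB, ← hdi] at hm
    nlinarith [hm]
  have hgoal : di * y i ^ (k - 1) + B = lams * y i ^ (k - 1) → 
      signAct k E y i = lams * y i ^ (k - 1) := by
    intro h
    unfold signAct
    rw [← hB, ← hdi] at *
    exact h
  by_cases hyi : 0 < y i
  · have hmem : Set.Ioi (-(y i)) ∈ nhds (0:ℝ) := isOpen_Ioi.mem_nhds (by simpa using hyi)
    set H : ℝ → ℝ := fun t => (lams - di) * ((y i + t) ^ k - y i ^ k) - k * B * t with hH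
    have hloc : IsLocalMin H 0 := by
      refine Filter.eventually_of_mem hmem fun t ht => ?_
      have h0 : H 0 = 0 := by simp [hH]
      rw [h0]
      exact key t (le_of_lt ht)
    have hd1 : HasDerivAt (fun t : ℝ => y i + t) 1 0 := (hasDerivAt_id 0).const_add (y i)
    have hd2 : HasDerivAt (fun t : ℝ => (y i + t) ^ k) ((k : ℝ) * (y i + 0) ^ (k - 1) * 1) 0 :=
      hd1.pow k
    have hd4 : HasDerivAt (fun t : ℝ => k * B * t) (k * B) 0 := by
      simpa using (hasDerivAt_id (0:ℝ)).const_mul ((k:ℝ) * B)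
    have hd3 : HasDerivAt H ((lams - di) * ((k : ℝ) * (y i + 0) ^ (k - 1) * 1) - k * B) 0 :=
      ((hd2.sub_const _).const_mul _).sub hd4
    have hzero := hloc.hasDerivAt_eq_zero hd3
    rw [add_zero, mul_one] at hzero
    apply hgoal
    have h2 : (k : ℝ) * ((lams - di) * y i ^ (k - 1) - B) = 0 := by linear_combination hzero
    have h3 : (lams - di) * y i ^ (k - 1) - B = 0 := by
      rcases mul_eq_zero.1 h2 with h | h
      · exact absurd h hk0'
      · exact h
    linarith [h3]
  · have hyi0 : y i = 0 := le_antisymm (not_lt.1 hyi) (hy0 i)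
    have hBnn : 0 ≤ B := Finset.sum_nonneg fun e _ => Finset.prod_nonneg fun j _ => hy0 j
    have hB0 : B = 0 := by
      rcases eq_or_lt_of_le hBnn with h | hBpos
      · exact h.symm
      exfalso
      have key' : ∀ t : ℝ, 0 < t → t ≤ 1 → k * B ≤ (lams - di) * t := by
        intro t ht ht1
        have h := key t (by rw [hyi0]; simpa using ht.le)
        rw [hyi0, zero_add, zero_pow hk0, sub_zero] at h
        -- h : 0 ≤ (lams - di) * t ^ k - k * B * t
        have htk : t ^ k = t ^ (k-1) * t := by rw [← pow_succ]; congr 1; omega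
        rw [htk] at h
        have h5 : k * B * t ≤ (lams - di) * t ^ (k - 1) * t := by linarith
        have h6 : k * B ≤ (lams - di) * t ^ (k - 1) := le_of_mul_le_mul_right (by linarith [h5]) ht
        -- t^(k-1) ≤ 1
        rcases le_or_gt (lams - di) 0 with hC | hC
        · have : (lams - di) * t ^ (k-1) ≤ 0 := mul_nonpos_of_nonpos_of_nonneg hC (by positivity)
          calc k * B ≤ (lams - di) * t ^ (k-1) := h6
            _ ≤ 0 := this
            _ ≤ (lams - di) * t := by nlinarith
        · have htpow : t ^ (k - 1) ≤ t := by
            calc t ^ (k-1) ≤ t ^ 1 := pow_le_pow_of_le_one ht.le ht1 (by omega)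
              _ = t := pow_one t
          calc k * B ≤ (lams - di) * t ^ (k-1) := h6
            _ ≤ (lams - di) * t := by nlinarith
      have hkB : 0 < (k:ℝ) * B := by positivity
      rcases le_or_gt (lams - di) 0 with hC | hC
      · have := key' 1 one_pos le_rfl
        nlinarith
      · set t := min 1 ((k * B) / (2 * (lams - di))) with htdef
        have ht : 0 < t := lt_min one_pos (by positivity)
        have h1 : t ≤ 1 := min_le_left _ _
        have h2 : t ≤ (k * B) / (2 * (lams - di)) := min_le_right _ _
        have := key' t ht h1
        have h2' : t * (2 * (lams - di)) ≤ k * B :=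
          (le_div_iff₀ (by positivity : (0:ℝ) < 2 * (lams - di))).1 h2
        nlinarith
    apply hgoal
    rw [hyi0, hB0, zero_pow (by omega : k - 1 ≠ 0)]
    ring

end Eig
section TestVec

variable {n : ℕ}

lemma test_calc {k d : ℕ} {E : Finset (Finset (Fin n))} (hk : 3 ≤ k)
    (hunif : ∀ e ∈ E, e.card = k) (i₀ : Fin n) (hd0 : hdeg E i₀ = d)
    {a : ℝ} (hapos : 0 < a)
    (Nset : Finset (Fin n))
    (hNset : Nset = (E.filter (fun e => i₀ ∈ e)).biUnion (fun e => e.erase i₀))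
    (x : Fin n → ℝ)
    (hx : x = fun j => if j = i₀ then a else if j ∈ Nset then 1 else 0) :
    (∀ j, 0 ≤ x j) ∧
    (∑ j, x j ^ k = a ^ k + Nset.card) ∧
    (Fq k E x = d * a ^ k + (∑ v ∈ Nset, (hdeg E v : ℝ))
        + k * (a * d + ((E.filter (fun e => i₀ ∉ e ∧ e ⊆ Nset)).card : ℝ))) := by
  have hk0 : k ≠ 0 := by omega
  have hi₀N : i₀ ∉ Nset := by
    rw [hNset]
    intro h
    obtain ⟨e, _, hmem⟩ := Finset.mem_biUnion.1 h
    exact (Finset.mem_erase.1 hmem).1 rfl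
  have hxi₀ : x i₀ = a := by rw [hx]; simp
  have hxN : ∀ v ∈ Nset, x v = 1 := by
    intro v hv
    rw [hx]
    have : v ≠ i₀ := fun h => hi₀N (h ▸ hv)
    simp [this, hv]
  have hxO : ∀ j, j ≠ i₀ → j ∉ Nset → x j = 0 := by
    intro j h1 h2
    rw [hx]; simp [h1, h2]
  have hxnn : ∀ j, 0 ≤ x j := by
    intro j
    rw [hx]
    dsimp only
    split
    · exact hapos.le
    · split
      · norm_num
      · exact le_refl 0
  have hNsub : Nset ⊆ Finset.univ.erase i₀ := by
    intro v hv
    exact Finset.mem_erase.2 ⟨fun h => hi₀N (h ▸ hv), Finset.mem_univ v⟩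
  -- weighted sum computation, for any weight function
  have hwsum : ∀ w : Fin n → ℝ, ∑ j, w j * x j ^ k = w i₀ * a ^ k + ∑ v ∈ Nset, w v := by
    intro w
    rw [← Finset.sum_erase_add _ _ (Finset.mem_univ i₀), hxi₀]
    have h1 : ∑ j ∈ Finset.univ.erase i₀, w j * x j ^ k = ∑ v ∈ Nset, w v := by
      rw [← Finset.sum_subset hNsub (fun j hj hjN => ?_)]
      · refine Finset.sum_congr rfl fun v hv => ?_
        rw [hxN v hv, one_pow, mul_one]
      · rw [hxO j (Finset.mem_erase.1 hj).1 hjN, zero_pow hk0, mul_zero]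
    rw [h1]; ring
  constructor
  · exact hxnn
  constructor
  · have := hwsum (fun _ => 1)
    simp only [one_mul] at this
    rw [this, Finset.sum_const, nsmul_eq_mul, mul_one]
  · unfold Fq
    have h1 : ∑ j, (hdeg E j : ℝ) * x j ^ k
        = (d : ℝ) * a ^ k + ∑ v ∈ Nset, (hdeg E v : ℝ) := by
      rw [hwsum (fun j => (hdeg E j : ℝ)), hd0]
    rw [h1]
    have h2 : ∑ e ∈ E, ∏ j ∈ e, x j
        = a * d + ((E.filter (fun e => i₀ ∉ e ∧ e ⊆ Nset)).card : ℝ) := by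
      rw [← Finset.sum_filter_add_sum_filter_not E (fun e => i₀ ∈ e)]
      have h3 : ∑ e ∈ E.filter (fun e => i₀ ∈ e), ∏ j ∈ e, x j = a * d := by
        have : ∀ e ∈ E.filter (fun e => i₀ ∈ e), ∏ j ∈ e, x j = a := by
          intro e he
          obtain ⟨heE, hi₀e⟩ := Finset.mem_filter.1 he
          rw [← Finset.mul_prod_erase e x hi₀e, hxi₀]
          have : ∏ j ∈ e.erase i₀, x j = 1 := by
            refine Finset.prod_eq_one fun j hj => ?_
            refine hxN j ?_
            rw [hNset]
            exact Finset.mem_biUnion.2 ⟨e, he, hj⟩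
          rw [this, mul_one]
        rw [Finset.sum_congr rfl this, Finset.sum_const, nsmul_eq_mul]
        rw [show (E.filter (fun e => i₀ ∈ e)).card = d from hd0]
        ring
      have h4 : ∑ e ∈ E.filter (fun e => ¬ i₀ ∈ e), ∏ j ∈ e, x j
          = ((E.filter (fun e => i₀ ∉ e ∧ e ⊆ Nset)).card : ℝ) := by
        have hstep : ∀ e ∈ E.filter (fun e => ¬ i₀ ∈ e),
            ∏ j ∈ e, x j = if e ⊆ Nset then (1:ℝ) else 0 := by
          intro e he
          obtain ⟨heE, hi₀e⟩ := Finset.mem_filter.1 he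
          by_cases hsub : e ⊆ Nset
          · rw [if_pos hsub]
            exact Finset.prod_eq_one fun j hj => hxN j (hsub hj)
          · rw [if_neg hsub]
            obtain ⟨j, hje, hjN⟩ := Finset.not_subset.1 hsub
            exact Finset.prod_eq_zero hje (hxO j (fun h => hi₀e (h ▸ hje)) hjN)
        rw [Finset.sum_congr rfl hstep, Finset.sum_boole]
        rw [Finset.filter_filter]
      rw [h3, h4]
    rw [h2]
    try ring

lemma deg_ge_one_of_mem_Nset {E : Finset (Finset (Fin n))} {i₀ : Fin n}
    {Nset : Finset (Fin n)}
    (hNset : Nset = (E.filter (fun e => i₀ ∈ e)).biUnion (fun e => e.erase i₀))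
    {v : Fin n} (hv : v ∈ Nset) : 1 ≤ hdeg E v := by
  rw [hNset] at hv
  obtain ⟨e, he, hmem⟩ := Finset.mem_biUnion.1 hv
  have heE : e ∈ E := (Finset.mem_filter.1 he).1
  have hve : v ∈ e := Finset.mem_of_mem_erase hmem
  have : e ∈ E.filter (fun e => v ∈ e) := Finset.mem_filter.2 ⟨heE, hve⟩
  unfold hdeg
  exact Finset.card_pos.2 ⟨e, this⟩

lemma Nset_card_le {k d : ℕ} {E : Finset (Finset (Fin n))}
    (hunif : ∀ e ∈ E, e.card = k) {i₀ : Fin n} (hd0 : hdeg E i₀ = d)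
    {Nset : Finset (Fin n)}
    (hNset : Nset = (E.filter (fun e => i₀ ∈ e)).biUnion (fun e => e.erase i₀)) :
    Nset.card ≤ d * (k - 1) := by
  rw [hNset]
  calc ((E.filter (fun e => i₀ ∈ e)).biUnion (fun e => e.erase i₀)).card
      ≤ ∑ e ∈ E.filter (fun e => i₀ ∈ e), (e.erase i₀).card := Finset.card_biUnion_le
    _ = ∑ e ∈ E.filter (fun e => i₀ ∈ e), (k - 1) := by
        refine Finset.sum_congr rfl fun e he => ?_
        obtain ⟨heE, hi₀e⟩ := Finset.mem_filter.1 he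
        rw [Finset.card_erase_of_mem hi₀e, hunif e heE]
    _ = d * (k - 1) := by
        rw [Finset.sum_const, smul_eq_mul,
          show (E.filter (fun e => i₀ ∈ e)).card = d from hd0]

end TestVec
section Struct

variable {n : ℕ}

lemma disjoint_of_card_biUnion {γ β : Type*} [DecidableEq γ] [DecidableEq β]
    {s : Finset γ} {f : γ → Finset β}
    (hcard : (s.biUnion f).card = ∑ e ∈ s, (f e).card) :
    ∀ e ∈ s, ∀ e' ∈ s, e ≠ e' → Disjoint (f e) (f e') := by
  intro e he e' he' hne
  rw [Finset.disjoint_left]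
  intro v hv hv'
  have hsplit : s.biUnion f = f e ∪ (s.erase e).biUnion f := by
    conv_lhs => rw [← Finset.insert_erase he]
    rw [Finset.biUnion_insert]
  have h1 : (f e ∪ (s.erase e).biUnion f).card + (f e ∩ (s.erase e).biUnion f).card
      = (f e).card + ((s.erase e).biUnion f).card := Finset.card_union_add_card_inter _ _
  have h2 : ((s.erase e).biUnion f).card ≤ ∑ x ∈ s.erase e, (f x).card :=
    Finset.card_biUnion_le
  have h3 : ∑ x ∈ s.erase e, (f x).card + (f e).card = ∑ x ∈ s, (f x).card :=
    Finset.sum_erase_add _ _ he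
  have h4 : 1 ≤ (f e ∩ (s.erase e).biUnion f).card := by
    refine Finset.card_pos.2 ⟨v, Finset.mem_inter.2 ⟨hv, ?_⟩⟩
    exact Finset.mem_biUnion.2 ⟨e', Finset.mem_erase.2 ⟨hne.symm, he'⟩, hv'⟩
  rw [hsplit] at hcard
  omega

lemma closure_of_transGen {E : Finset (Finset (Fin n))} {S : Finset (Fin n)}
    (hedge : ∀ e ∈ E, ∀ b ∈ e, b ∈ S → ∀ c ∈ e, c ∈ S)
    {u b : Fin n} (h : Relation.TransGen (fun a b : Fin n => ∃ e ∈ E, a ∈ e ∧ b ∈ e) u b)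
    (hb : b ∈ S) : u ∈ S := by
  induction h with
  | single hrel =>
    obtain ⟨e, heE, hu, hb'⟩ := hrel
    exact hedge e heE _ hb' hb _ hu
  | tail _ hrel ih =>
    obtain ⟨e, heE, hc, hb'⟩ := hrel
    exact ih (hedge e heE _ hb' hb _ hc)

lemma extract_hyperstar {k d : ℕ} {E : Finset (Finset (Fin n))} (hk : 3 ≤ k)
    (hunif : ∀ e ∈ E, e.card = k) (hconn : IsConnectedH E) (hd : 0 < d)
    {i₀ : Fin n} (hd0 : hdeg E i₀ = d)
    {Nset : Finset (Fin n)}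
    (hNset : Nset = (E.filter (fun e => i₀ ∈ e)).biUnion (fun e => e.erase i₀))
    (hdeg1 : ∀ v ∈ Nset, hdeg E v = 1)
    (hM : E.filter (fun e => i₀ ∉ e ∧ e ⊆ Nset) = ∅)
    (hNcard : Nset.card = d * (k - 1)) :
    IsHyperstar k d E := by
  have hk0 : k ≠ 0 := by omega
  -- sum of cards of erased star edges
  have hsum : ∑ e ∈ E.filter (fun e => i₀ ∈ e), (e.erase i₀).card = d * (k - 1) := by
    calc ∑ e ∈ E.filter (fun e => i₀ ∈ e), (e.erase i₀).card
        = ∑ e ∈ E.filter (fun e => i₀ ∈ e), (k - 1) := by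
          refine Finset.sum_congr rfl fun e he => ?_
          obtain ⟨heE, hi₀e⟩ := Finset.mem_filter.1 he
          rw [Finset.card_erase_of_mem hi₀e, hunif e heE]
      _ = d * (k - 1) := by
          rw [Finset.sum_const, smul_eq_mul,
            show (E.filter (fun e => i₀ ∈ e)).card = d from hd0]
  have hdisj : ∀ e ∈ E.filter (fun e => i₀ ∈ e), ∀ e' ∈ E.filter (fun e => i₀ ∈ e),
      e ≠ e' → Disjoint (e.erase i₀) (e'.erase i₀) := by
    apply disjoint_of_card_biUnion
    rw [← hNset, hNcard, hsum]
  -- every edge that meets S := insert i₀ Nset contains i₀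
  set S : Finset (Fin n) := insert i₀ Nset with hS
  have hmem_star : ∀ e ∈ E, ∀ b ∈ e, b ∈ S → i₀ ∈ e := by
    intro e heE b hbe hbS
    rcases Finset.mem_insert.1 hbS with h | h
    · exact h ▸ hbe
    · -- b ∈ Nset has degree 1, so e is its unique (star) edge
      obtain ⟨e₀, he₀, hbe₀⟩ := Finset.mem_biUnion.1 (hNset ▸ h)
      obtain ⟨he₀E, hi₀e₀⟩ := Finset.mem_filter.1 he₀
      have h1 : hdeg E b = 1 := hdeg1 b h
      have hcard1 : (E.filter (fun e => b ∈ e)).card ≤ 1 := le_of_eq h1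
      have hee₀ : e = e₀ := by
        have hmem1 : e ∈ E.filter (fun e => b ∈ e) := Finset.mem_filter.2 ⟨heE, hbe⟩
        have hmem2 : e₀ ∈ E.filter (fun e => b ∈ e) :=
          Finset.mem_filter.2 ⟨he₀E, Finset.mem_of_mem_erase hbe₀⟩
        exact Finset.card_le_one.1 hcard1 _ hmem1 _ hmem2
      exact hee₀ ▸ hi₀e₀
  have hstar_sub : ∀ e ∈ E, i₀ ∈ e → e ⊆ S := by
    intro e heE hi₀e v hve
    by_cases hv : v = i₀
    · exact hv ▸ Finset.mem_insert_self i₀ Nset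
    · refine Finset.mem_insert_of_mem ?_
      rw [hNset]
      exact Finset.mem_biUnion.2 ⟨e, Finset.mem_filter.2 ⟨heE, hi₀e⟩,
        Finset.mem_erase.2 ⟨hv, hve⟩⟩
  have hedge : ∀ e ∈ E, ∀ b ∈ e, b ∈ S → ∀ c ∈ e, c ∈ S := by
    intro e heE b hbe hbS c hce
    exact hstar_sub e heE (hmem_star e heE b hbe hbS) hce
  -- every vertex is in S
  have hall : ∀ v : Fin n, v ∈ S := by
    intro v
    by_contra hv
    have hvne : v ≠ i₀ := fun h => hv (h ▸ Finset.mem_insert_self i₀ Nset)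
    exact hv (closure_of_transGen hedge (hconn v i₀ hvne) (Finset.mem_insert_self i₀ Nset))
  -- every edge contains i₀
  have hstar_all : ∀ e ∈ E, i₀ ∈ e := by
    intro e heE
    have hene : e.Nonempty := Finset.card_pos.1 (by rw [hunif e heE]; omega)
    obtain ⟨b, hb⟩ := hene
    exact hmem_star e heE b hb (hall b)
  have hfilter_all : E.filter (fun e => i₀ ∈ e) = E := by
    apply Finset.filter_true_of_mem hstar_all
  have hEcard : E.card = d := by
    rw [← hd0]; unfold hdeg; rw [hfilter_all]
  -- build the map
  refine ⟨i₀, fun i => ((E.equivFin.symm (Fin.cast hEcard.symm i)) : Finset (Fin n)).erase i₀,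
    ?_, ?_, ?_, ?_, ?_⟩
  · intro i; exact Finset.notMem_erase _ _
  · intro i
    set e := (E.equivFin.symm (Fin.cast hEcard.symm i) : Finset (Fin n)) with he
    have heE : e ∈ E := (E.equivFin.symm (Fin.cast hEcard.symm i)).2
    rw [Finset.card_erase_of_mem (hstar_all e heE), hunif e heE]
  · intro i j hij
    have hne : (E.equivFin.symm (Fin.cast hEcard.symm i) : Finset (Fin n))
        ≠ (E.equivFin.symm (Fin.cast hEcard.symm j) : Finset (Fin n)) := by
      intro h
      apply hij
      have := Subtype.coe_injective h
      have := E.equivFin.symm.injective this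
      simpa [Fin.ext_iff] using this
    have h1 := (E.equivFin.symm (Fin.cast hEcard.symm i)).2
    have h2 := (E.equivFin.symm (Fin.cast hEcard.symm j)).2
    exact hdisj _ (by rw [hfilter_all]; exact h1) _ (by rw [hfilter_all]; exact h2) hne
  · intro v hv
    have hvS : v ∈ S := hall v
    have hvN : v ∈ Nset := by
      rcases Finset.mem_insert.1 hvS with h | h
      · exact absurd h hv
      · exact h
    rw [hNset] at hvN
    obtain ⟨e, he, hve⟩ := Finset.mem_biUnion.1 hvN
    have heE : e ∈ E := (Finset.mem_filter.1 he).1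
    refine ⟨Fin.cast hEcard (E.equivFin ⟨e, heE⟩), ?_⟩
    have : (E.equivFin.symm (Fin.cast hEcard.symm (Fin.cast hEcard (E.equivFin ⟨e, heE⟩))))
        = ⟨e, heE⟩ := by
      simp [Fin.ext_iff]
    simp only [this]
    exact hve
  · apply Finset.Subset.antisymm
    · intro e heE
      rw [Finset.mem_image]
      refine ⟨Fin.cast hEcard (E.equivFin ⟨e, heE⟩), Finset.mem_univ _, ?_⟩
      have : (E.equivFin.symm (Fin.cast hEcard.symm (Fin.cast hEcard (E.equivFin ⟨e, heE⟩))))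
          = ⟨e, heE⟩ := by
        simp [Fin.ext_iff]
      simp only [this]
      exact Finset.insert_erase (hstar_all e heE)
    · intro e he
      rw [Finset.mem_image] at he
      obtain ⟨i, _, hi⟩ := he
      set e₀ := (E.equivFin.symm (Fin.cast hEcard.symm i) : Finset (Fin n)) with he₀
      have he₀E : e₀ ∈ E := (E.equivFin.symm (Fin.cast hEcard.symm i)).2
      rw [← hi, Finset.insert_erase (hstar_all e₀ he₀E)]
      exact he₀E

end Struct
section StarUpper

variable {n : ℕ}

lemma hyperstar_eig_le {k d : ℕ} (hk : 3 ≤ k) (hd : 0 < d)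
    {E : Finset (Finset (Fin n))}
    (hstar : IsHyperstar k d E) {mu : ℝ} (hmu : IsSignEig k E mu)
    {a : ℝ} (hda : (d : ℝ) - 1 < a)
    (hamax : ∀ b : ℝ, b ^ k + (1 - (d : ℝ)) * b ^ (k - 1) - (d : ℝ) = 0 → b ≤ a) :
    mu ≤ a + 1 := by
  have hk0 : k ≠ 0 := by omega
  have hk1 : k - 1 ≠ 0 := by omega
  have hd1 : (1:ℝ) ≤ (d:ℝ) := by exact_mod_cast hd
  rcases le_or_gt mu ((d:ℝ)) with hmud | hmud
  · linarith
  obtain ⟨h, P, hhP, hPcard, hPdisj, hPcover, hEeq⟩ := hstar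
  obtain ⟨x, hx0, heig⟩ := hmu
  have hmu1 : (1:ℝ) < mu := lt_of_le_of_lt hd1 hmud
  have hmu1' : mu - 1 ≠ 0 := by linarith
  -- injectivity of edge map
  have hPne : ∀ i, (P i).Nonempty := by
    intro i
    refine Finset.card_pos.1 ?_
    rw [hPcard i]; omega
  have hinj : Function.Injective (fun i => insert h (P i)) := by
    intro i j hij
    by_contra hne
    obtain ⟨v, hv⟩ := hPne i
    have hvne : v ≠ h := fun hveq => hhP i (hveq ▸ hv)
    have hij' : insert h (P i) = insert h (P j) := hij
    have hv2 : v ∈ insert h (P j) := hij' ▸ Finset.mem_insert_of_mem hv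
    have hv3 : v ∈ P j := by
      rcases Finset.mem_insert.1 hv2 with h' | h'
      · exact absurd h' hvne
      · exact h'
    exact (Finset.disjoint_left.1 (hPdisj i j hne)) hv hv3
  have hmemE : ∀ i, insert h (P i) ∈ E := by
    intro i
    rw [hEeq]
    exact Finset.mem_image.2 ⟨i, Finset.mem_univ i, rfl⟩
  -- heart degree
  have hfilterh : E.filter (fun e => h ∈ e) = E := by
    refine Finset.filter_true_of_mem fun e he => ?_
    rw [hEeq] at he
    obtain ⟨i, _, rfl⟩ := Finset.mem_image.1 he
    exact Finset.mem_insert_self _ _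
  have hdegh : hdeg E h = d := by
    unfold hdeg
    rw [hfilterh, hEeq, Finset.card_image_of_injective _ hinj, Finset.card_univ,
      Fintype.card_fin]
  -- leaf filter
  have hfilterv : ∀ i, ∀ v ∈ P i, E.filter (fun e => v ∈ e) = {insert h (P i)} := by
    intro i v hv
    have hvne : v ≠ h := fun hveq => hhP i (hveq ▸ hv)
    ext e
    simp only [Finset.mem_filter, Finset.mem_singleton]
    constructor
    · rintro ⟨heE, hvee⟩
      rw [hEeq] at heE
      obtain ⟨j, _, rfl⟩ := Finset.mem_image.1 heE
      have hvPj : v ∈ P j := by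
        rcases Finset.mem_insert.1 hvee with h' | h'
        · exact absurd h' hvne
        · exact h'
      have : j = i := by
        by_contra hne
        exact (Finset.disjoint_left.1 (hPdisj j i hne)) hvPj hv
      rw [this]
    · rintro rfl
      exact ⟨hmemE i, Finset.mem_insert_of_mem hv⟩
  -- leaf equations
  have hleaf : ∀ i, ∀ v ∈ P i,
      (mu - 1) * x v ^ (k - 1) = x h * ∏ u ∈ (P i).erase v, x u := by
    intro i v hv
    have hvne : v ≠ h := fun hveq => hhP i (hveq ▸ hv)
    have := heig v
    unfold signAct at this
    rw [hfilterv i v hv, Finset.sum_singleton] at this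
    have herase : (insert h (P i)).erase v = insert h ((P i).erase v) :=
      Finset.erase_insert_of_ne hvne.symm
    rw [herase, Finset.prod_insert (fun hmem => hhP i (Finset.mem_of_mem_erase hmem))] at this
    have hdv : hdeg E v = 1 := by
      unfold hdeg; rw [hfilterv i v hv, Finset.card_singleton]
    rw [hdv] at this
    push_cast at this
    linarith
  -- heart equation
  have hheart : (mu - d) * x h ^ (k - 1) = ∑ i : Fin d, ∏ u ∈ P i, x u := by
    have := heig h
    unfold signAct at this
    rw [hfilterh, hdegh, hEeq, Finset.sum_image (fun i _ j _ hij => hinj hij)] at this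
    have herase : ∀ i : Fin d, (insert h (P i)).erase h = P i := by
      intro i
      exact Finset.erase_insert (hhP i)
    rw [Finset.sum_congr rfl (fun i _ => by rw [herase i])] at this
    linarith
  -- x h ≠ 0
  have hxh : x h ≠ 0 := by
    intro hxh0
    apply hx0
    funext v
    simp only [Pi.zero_apply]
    by_cases hvh : v = h
    · rw [hvh]; exact hxh0
    · obtain ⟨i, hvi⟩ := hPcover v hvh
      have hlv := hleaf i v hvi
      rw [hxh0, zero_mul] at hlv
      rcases mul_eq_zero.1 hlv with h' | h'
      · exact absurd h' hmu1'
      · exact pow_eq_zero_iff hk1 |>.1 h'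
  -- per-branch product identity
  have hbranch : ∀ i : Fin d, (∏ u ∈ P i, x u) ≠ 0 →
      (mu - 1) ^ (k - 1) * (∏ u ∈ P i, x u) = x h ^ (k - 1) := by
    intro i hp
    set p : ℝ := ∏ u ∈ P i, x u with hpdef
    have hq : ∀ v ∈ P i, (∏ u ∈ (P i).erase v, x u) * x v = p :=
      fun v hv => by rw [mul_comm]; exact Finset.mul_prod_erase _ _ hv
    have hmulall : ∏ v ∈ P i, ((mu - 1) * x v ^ (k - 1))
        = ∏ v ∈ P i, (x h * ∏ u ∈ (P i).erase v, x u) :=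
      Finset.prod_congr rfl fun v hv => hleaf i v hv
    rw [Finset.prod_mul_distrib, Finset.prod_mul_distrib] at hmulall
    rw [Finset.prod_const, Finset.prod_const, hPcard i, Finset.prod_pow] at hmulall
    -- hmulall : (mu-1)^(k-1) * p^(k-1) = x h^(k-1) * ∏ v, ∏_{erase v} x
    have hqq : (∏ v ∈ P i, ∏ u ∈ (P i).erase v, x u) * p = p ^ (k - 1) := by
      have h1 : ∏ v ∈ P i, ((∏ u ∈ (P i).erase v, x u) * x v) = p ^ (k-1) := by
        rw [Finset.prod_congr rfl hq, Finset.prod_const, hPcard i]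
      rw [Finset.prod_mul_distrib] at h1
      exact h1
    have hpk : p ^ (k - 1) ≠ 0 := pow_ne_zero _ hp
    have hfinal : ((mu - 1) ^ (k - 1) * p) * p ^ (k - 1) = x h ^ (k - 1) * p ^ (k - 1) := by
      calc ((mu - 1) ^ (k - 1) * p) * p ^ (k - 1)
          = ((mu - 1) ^ (k - 1) * p ^ (k-1)) * p := by ring
        _ = (x h ^ (k - 1) * ∏ v ∈ P i, ∏ u ∈ (P i).erase v, x u) * p := by rw [hmulall]
        _ = x h ^ (k - 1) * ((∏ v ∈ P i, ∏ u ∈ (P i).erase v, x u) * p) := by ring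
        _ = x h ^ (k - 1) * p ^ (k - 1) := by rw [hqq]
    exact mul_right_cancel₀ hpk hfinal
  -- sum over branches
  set T : Finset (Fin d) := Finset.univ.filter (fun i => (∏ u ∈ P i, x u) ≠ 0) with hT
  set c : ℝ := x h ^ (k - 1) / (mu - 1) ^ (k - 1) with hc
  have hmupow : (mu - 1) ^ (k - 1) ≠ 0 := pow_ne_zero _ hmu1'
  have hsumT : ∑ i : Fin d, ∏ u ∈ P i, x u = T.card * c := by
    rw [← Finset.sum_filter_add_sum_filter_not Finset.univ (fun i => (∏ u ∈ P i, x u) ≠ 0)]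
    have h2 : ∑ i ∈ Finset.univ.filter (fun i => ¬ (∏ u ∈ P i, x u) ≠ 0), ∏ u ∈ P i, x u
        = 0 := by
      refine Finset.sum_eq_zero fun i hi => ?_
      have := (Finset.mem_filter.1 hi).2
      push_neg at this
      exact this
    have h1 : ∑ i ∈ T, ∏ u ∈ P i, x u = T.card * c := by
      have : ∀ i ∈ T, (∏ u ∈ P i, x u) = c := by
        intro i hi
        have hp := (Finset.mem_filter.1 hi).2
        have := hbranch i hp
        rw [hc, eq_div_iff hmupow]
        linarith [this]
      rw [Finset.sum_congr rfl this, Finset.sum_const, nsmul_eq_mul]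
    rw [h1, h2, add_zero]
  have hsle : (T.card : ℝ) ≤ (d : ℝ) := by
    have : T.card ≤ d := by
      calc T.card ≤ Finset.univ.card := Finset.card_filter_le _ _
        _ = d := by rw [Finset.card_univ, Fintype.card_fin]
    exact_mod_cast this
  -- key equation
  have hkey : (mu - d) * (mu - 1) ^ (k - 1) = T.card := by
    have h1 : (mu - d) * x h ^ (k - 1) = T.card * c := by rw [← hsumT]; exact hheart
    have h2 : (mu - d) * x h ^ (k - 1) * (mu - 1) ^ (k - 1)
        = T.card * x h ^ (k - 1) := by
      rw [h1, hc]
      field_simp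
    have hxhp : x h ^ (k - 1) ≠ 0 := pow_ne_zero _ hxh
    have h3 : ((mu - d) * (mu - 1) ^ (k - 1)) * x h ^ (k - 1)
        = (T.card : ℝ) * x h ^ (k - 1) := by linear_combination h2
    exact mul_right_cancel₀ hxhp h3
  -- conclude via root bound
  have hfle : (mu - 1) ^ k + (1 - (d : ℝ)) * (mu - 1) ^ (k - 1) - (d : ℝ) ≤ 0 := by
    have hpow : (mu - 1) ^ k = (mu - 1) ^ (k - 1) * (mu - 1) := by
      rw [← pow_succ]; congr 1; omega
    rw [hpow]
    nlinarith [hkey, hsle]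
  obtain ⟨r, hr, hbr⟩ := f_nonpos_le_root hk hd hfle
  have := hamax r hr
  linarith

end StarUpper
/-- For a `k`-uniform connected hypergraph with maximum degree `d > 0` and
signless Laplacian tensor `Q`, if `a` is the largest real root of
`α^k + (1-d)·α^(k-1) - d = 0`, then `a ∈ (d-1, d]`, and
`λ(Q) ≥ d + d·(1/a)^(k-1)`, with equality iff `G` is a hyperstar. -/
theorem largest_sign_eig_lower_bound {n k d : ℕ} (hk : 3 ≤ k) (hkn : k ≤ n)
    (E : Finset (Finset (Fin n))) (hunif : ∀ e ∈ E, e.card = k)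
    (hconn : IsConnectedH E)
    (hdle : ∀ i, hdeg E i ≤ d) (hdmax : ∃ i, hdeg E i = d) (hd : 0 < d)
    (lam : ℝ) (hlam : IsLargestSignEig k E lam)
    (a : ℝ) (ha : a ^ k + (1 - (d : ℝ)) * a ^ (k - 1) - (d : ℝ) = 0)
    (hamax : ∀ b : ℝ, b ^ k + (1 - (d : ℝ)) * b ^ (k - 1) - (d : ℝ) = 0 → b ≤ a) :
    a ∈ Set.Ioc ((d : ℝ) - 1) (d : ℝ) ∧
    (d : ℝ) + (d : ℝ) * (1 / a) ^ (k - 1) ≤ lam ∧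
    (lam = (d : ℝ) + (d : ℝ) * (1 / a) ^ (k - 1) ↔ IsHyperstar k d E) := by
  have hd1 : 1 ≤ d := hd
  obtain ⟨hIoc, hapos, hident⟩ := root_facts hk hd1 ha hamax
  obtain ⟨i₀, hd0⟩ := hdmax
  have hn : 0 < n := by omega
  have hk0 : k ≠ 0 := by omega
  obtain ⟨lams, y, hyne, heig, master⟩ := exists_good_eig hk hn hunif
  have hlams_le : lams ≤ lam := hlam.2 lams ⟨y, hyne, heig⟩
  set Nset : Finset (Fin n) := (E.filter (fun e => i₀ ∈ e)).biUnion (fun e => e.erase i₀)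
    with hNset
  set x : Fin n → ℝ := fun j => if j = i₀ then a else if j ∈ Nset then 1 else 0 with hx
  obtain ⟨hxnn, hsum, hFq⟩ := test_calc hk hunif i₀ hd0 hapos Nset hNset x hx
  set N : ℝ := (Nset.card : ℝ) with hN
  set D : ℝ := ∑ v ∈ Nset, (hdeg E v : ℝ) with hD
  set M : ℝ := ((E.filter (fun e => i₀ ∉ e ∧ e ⊆ Nset)).card : ℝ) with hM
  have hNnn : (0:ℝ) ≤ N := Nat.cast_nonneg _
  have hMnn : (0:ℝ) ≤ M := Nat.cast_nonneg _
  have hDgeN : N ≤ D := by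
    rw [hD, hN]
    calc ((Nset.card : ℕ) : ℝ) = ∑ _v ∈ Nset, (1:ℝ) := by
          rw [Finset.sum_const, nsmul_eq_mul, mul_one]
      _ ≤ ∑ v ∈ Nset, (hdeg E v : ℝ) := Finset.sum_le_sum fun v hv => by
          exact_mod_cast deg_ge_one_of_mem_Nset hNset hv
  have hNle : N ≤ (d:ℝ) * ((k:ℝ) - 1) := by
    have h1 := Nset_card_le hunif hd0 hNset
    rw [hN]
    calc ((Nset.card : ℕ):ℝ) ≤ ((d * (k-1) : ℕ) : ℝ) := by exact_mod_cast h1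
      _ = (d:ℝ) * ((k:ℝ)-1) := by
          push_cast [Nat.cast_sub (by omega : 1 ≤ k)]
          ring
  have hak : a ^ k = a ^ (k-1) * a := by rw [← pow_succ]; congr 1; omega
  have hkey : (a+1) * (a^k + N)
      = (d:ℝ)*a^k + (k:ℝ)*a*(d:ℝ) + N + a*(N - (d:ℝ)*((k:ℝ)-1)) := by
    rw [hak]
    rw [hak] at ha
    linear_combination a * ha
  have hsumpos : 0 < a ^ k + N := by positivity
  have haux1 : 0 ≤ a * ((d:ℝ)*((k:ℝ)-1) - N) := mul_nonneg hapos.le (by linarith)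
  have haux2 : 0 ≤ (k:ℝ) * M := mul_nonneg (Nat.cast_nonneg k) hMnn
  have hm := master x hxnn
  rw [hFq, hsum] at hm
  -- hm : d*a^k + D + k*(a*d + M) ≤ lams * (a^k + N)
  have hexp : (k:ℝ) * (a * (d:ℝ) + M) = (k:ℝ)*a*(d:ℝ) + (k:ℝ)*M := by ring
  have hchain : (a + 1) * (a^k + N) ≤ lams * (a^k + N) := by
    linarith [hm, hkey, hDgeN, haux1, haux2, hexp]
  have hlams_ge : a + 1 ≤ lams := le_of_mul_le_mul_right hchain hsumpos
  have hlow : a + 1 ≤ lam := le_trans hlams_ge hlams_le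
  rw [hident]
  refine ⟨hIoc, hlow, ?_, ?_⟩
  · intro hlameq
    have hlams_eq : lams = a + 1 := le_antisymm (hlameq ▸ hlams_le) hlams_ge
    rw [hlams_eq] at hm
    have hsum0 : (D - N) + (k:ℝ)*M + a*((d:ℝ)*((k:ℝ)-1) - N) ≤ 0 := by
      linarith [hm, hkey, hexp]
    have hDeq : D = N := by linarith [hsum0, hDgeN, haux1, haux2]
    have hMeq : M = 0 := by
      have hkM : (k:ℝ) * M = 0 := le_antisymm (by linarith [hsum0, hDgeN, haux1]) haux2
      rcases mul_eq_zero.1 hkM with h' | h'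
      · exact absurd h' (by positivity)
      · exact h'
    have hNeq : N = (d:ℝ)*((k:ℝ)-1) := by
      have haN : a * ((d:ℝ)*((k:ℝ)-1) - N) = 0 :=
        le_antisymm (by linarith [hsum0, hDgeN, haux2]) haux1
      rcases mul_eq_zero.1 haN with h' | h'
      · exact absurd h' hapos.ne'
      · linarith
    -- convert to ℕ
    have hdeg1 : ∀ v ∈ Nset, hdeg E v = 1 := by
      have hcast : ((∑ v ∈ Nset, hdeg E v : ℕ) : ℝ) = D := by
        rw [hD]; push_cast; rfl
      have hnat : ∑ v ∈ Nset, hdeg E v = Nset.card := by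
        have : ((∑ v ∈ Nset, hdeg E v : ℕ) : ℝ) = ((Nset.card : ℕ) : ℝ) := by
          rw [hcast, hDeq, hN]
        exact_mod_cast this
      by_contra hcon
      push_neg at hcon
      obtain ⟨v, hv, hne⟩ := hcon
      have hlt : ∑ _v ∈ Nset, 1 < ∑ v ∈ Nset, hdeg E v := by
        refine Finset.sum_lt_sum (fun i hi => deg_ge_one_of_mem_Nset hNset hi) ?_
        exact ⟨v, hv, lt_of_le_of_ne (deg_ge_one_of_mem_Nset hNset hv) (Ne.symm hne)⟩
      rw [Finset.sum_const, smul_eq_mul, mul_one] at hlt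
      omega
    have hMempty : E.filter (fun e => i₀ ∉ e ∧ e ⊆ Nset) = ∅ := by
      refine Finset.card_eq_zero.1 ?_
      have : ((E.filter (fun e => i₀ ∉ e ∧ e ⊆ Nset)).card : ℝ) = 0 := by
        rw [← hM]; exact hMeq
      exact_mod_cast this
    have hNcard : Nset.card = d * (k - 1) := by
      have : ((Nset.card : ℕ) : ℝ) = ((d * (k-1) : ℕ) : ℝ) := by
        rw [← hN, hNeq]
        push_cast [Nat.cast_sub (by omega : 1 ≤ k)]
        ring
      exact_mod_cast this
    exact extract_hyperstar hk hunif hconn hd hd0 hNset hdeg1 hMempty hNcard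
  · intro hstar
    have hup := hyperstar_eig_le hk hd hstar hlam.1 hIoc.1 hamax
    linarith
end
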